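/- arXiv:2311.00827 — 10 statements merged into one kernel-verified Lean document; each statement's English description precedes it below -/
import Mathlib

section
/- For every nonzero element a of K, the number of nonzero elements x of L satisfying Tr_{K/F}(a·x^{q^n+1}) = 0 is exactly (q^n + 1)(q^{n-1} - 1). (This is the number of nonzero vectors on the elliptic quadric Q_a; projectively Q_a has (q^n+1)(q^{n-1}-1)/(q-1) points, the point count of an elliptic quadric of PG(2n-1,q).) -/
open Polynomial Finset

section Aux

variable {L : Type*} [Field L]

lemma aux_ncard_roots_le (p : Polynomial L) (hp : p ≠ 0) :
    {x : L | p.eval x = 0}.ncard ≤ p.natDegree := by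
  classical
  have h : {x : L | p.eval x = 0} = ↑p.roots.toFinset := by
    ext x
    simp [Polynomial.mem_roots, hp, Polynomial.IsRoot]
  rw [h, Set.ncard_coe_finset]
  exact (p.roots.toFinset_card_le).trans (Polynomial.card_roots' p)

lemma aux_pow_fiber_le (m : ℕ) (hm : 1 ≤ m) (c : L) :
    {x : L | x ^ m = c}.ncard ≤ m := by
  have h : {x : L | x ^ m = c} = {x : L | (X ^ m - C c : Polynomial L).eval x = 0} := by
    ext x; simp [sub_eq_zero]
  rw [h]
  have hne : (X ^ m - C c : Polynomial L) ≠ 0 := X_pow_sub_C_ne_zero hm c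
  have := aux_ncard_roots_le (X ^ m - C c) hne
  rwa [natDegree_X_pow_sub_C] at this

lemma aux_trace_fiber_le (q n : ℕ) (hq : 2 ≤ q) (hn : 1 ≤ n) (c : L) :
    {z : L | ∑ i ∈ Finset.range n, z ^ q ^ i = c}.ncard ≤ q ^ (n - 1) := by
  classical
  set p : Polynomial L := (∑ i ∈ Finset.range n, X ^ q ^ i) - C c with hp
  have hev : ∀ z : L, p.eval z = (∑ i ∈ Finset.range n, z ^ q ^ i) - c := by
    intro z; simp [hp, Polynomial.eval_finset_sum]
  have hset : {z : L | ∑ i ∈ Finset.range n, z ^ q ^ i = c} = {z : L | p.eval z = 0} := by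
    ext z; simp [hev, sub_eq_zero]
  have hcoeff : p.coeff (q ^ (n - 1)) = 1 := by
    have hpos : 0 < q ^ (n - 1) := Nat.pow_pos (by omega)
    rw [hp, Polynomial.coeff_sub, Polynomial.coeff_C, if_neg hpos.ne',
      Polynomial.finset_sum_coeff]
    rw [Finset.sum_eq_single (n - 1)]
    · simp
    · intro i hi hne
      rw [Polynomial.coeff_X_pow, if_neg]
      exact fun h => hne (Nat.pow_right_injective hq (by simpa using h.symm))
    · intro h
      exact absurd (Finset.mem_range.mpr (by omega)) h
  have hne : p ≠ 0 := fun h => by simp [h] at hcoeff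
  have hdeg : p.natDegree ≤ q ^ (n - 1) := by
    apply le_trans (Polynomial.natDegree_sub_le _ _)
    rw [max_le_iff]
    constructor
    · apply Polynomial.natDegree_sum_le_of_forall_le
      intro i hi
      have hi' := Finset.mem_range.mp hi
      rw [Polynomial.natDegree_X_pow]
      exact Nat.pow_le_pow_right (by omega) (by omega)
    · simp
  rw [hset]
  exact (aux_ncard_roots_le p hne).trans hdeg

lemma aux_subfield_eq_roots [Finite L] (S : Subfield L) (Q : ℕ) (hQ : 2 ≤ Q)
    (hcard : Nat.card S = Q) : (S : Set L) = {x : L | x ^ Q = x} := by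
  classical
  cases nonempty_fintype L
  have hsub : (S : Set L) ⊆ {x : L | x ^ Q = x} := by
    intro x hx
    have : (⟨x, hx⟩ : S) ^ Fintype.card S = ⟨x, hx⟩ := FiniteField.pow_card _
    have h2 : Fintype.card S = Q := by rw [← Nat.card_eq_fintype_card, hcard]
    rw [h2] at this
    have := congrArg (Subtype.val) this
    push_cast at this
    exact this
  have hfin : {x : L | x ^ Q = x}.Finite := Set.toFinite _
  refine Set.eq_of_subset_of_ncard_le hsub ?_ hfin
  have h1 : {x : L | x ^ Q = x} = {x : L | (X ^ Q - X : Polynomial L).eval x = 0} := by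
    ext x; simp [sub_eq_zero]
  have hne : (X ^ Q - X : Polynomial L) ≠ 0 := by
    intro h
    have h2 := congrArg (fun p => Polynomial.coeff p Q) h
    simp [Polynomial.coeff_X, (show ¬((1:ℕ) = Q) by omega)] at h2
  have hdeg : (X ^ Q - X : Polynomial L).natDegree ≤ Q := by
    apply le_trans (Polynomial.natDegree_sub_le _ _)
    simp [Polynomial.natDegree_X_pow, Polynomial.natDegree_X]
    omega
  have hle : {x : L | x ^ Q = x}.ncard ≤ Q := by
    rw [h1]; exact (aux_ncard_roots_le _ hne).trans hdeg
  have hSn : (S : Set L).ncard = Q := by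
    rw [← Nat.card_coe_set_eq]; exact hcard
  rw [hSn]; exact hle

lemma aux_eq_fibers {α : Type*} [DecidableEq α] (t : Finset α) (g : α → ℕ) (c : ℕ)
    (hle : ∀ i ∈ t, g i ≤ c) (hsum : ∑ i ∈ t, g i = t.card * c) :
    ∀ i ∈ t, g i = c := by
  by_contra h
  push_neg at h
  obtain ⟨i0, hi0, hne⟩ := h
  have hlt : ∑ i ∈ t, g i < ∑ _i ∈ t, c :=
    Finset.sum_lt_sum hle ⟨i0, hi0, lt_of_le_of_ne (hle _ hi0) hne⟩
  rw [Finset.sum_const, smul_eq_mul] at hlt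
  omega

end Aux

/-- For every nonzero `a ∈ K`, the number of nonzero `x ∈ L` with
`Tr_{K/F}(a * x^(q^n+1)) = 0` is exactly `(q^n + 1) * (q^(n-1) - 1)`.
Here `Tr_{K/F}(z) = ∑ i < n, z^(q^i)` for `z ∈ K`. -/
theorem stmt0 (q n : ℕ) (hq : IsPrimePow q) (hn : 2 ≤ n)
    (L : Type*) [Field L] [Finite L]
    (F K : Subfield L) (hFK : F ≤ K)
    (hFcard : Nat.card F = q) (hKcard : Nat.card K = q ^ n)
    (hLcard : Nat.card L = q ^ (2 * n))
    (a : L) (haK : a ∈ K) (ha : a ≠ 0) :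
    Set.ncard {x : L | x ≠ 0 ∧ ∑ i ∈ Finset.range n, (a * x ^ (q ^ n + 1)) ^ q ^ i = 0}
      = (q ^ n + 1) * (q ^ (n - 1) - 1) := by
  classical
  cases nonempty_fintype L
  have hq2 : 2 ≤ q := hq.two_le
  obtain ⟨p, k, hpp, hk, hpk⟩ := hq
  have hp' : p.Prime := Nat.prime_iff.mpr hpp
  haveI := Fact.mk hp'
  have hcardL : Fintype.card L = q ^ (2 * n) := by rw [← Nat.card_eq_fintype_card, hLcard]
  -- characteristic
  obtain ⟨d, hrp, hcard2⟩ := FiniteField.card L (ringChar L)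
  have hrpeq : ringChar L = p := by
    have h1 : ringChar L ∣ p ^ (k * (2 * n)) := by
      rw [pow_mul, hpk, ← hcardL, hcard2]
      exact dvd_pow_self _ (by positivity)
    exact (Nat.prime_dvd_prime_iff_eq hrp hp').mp (hrp.dvd_of_dvd_pow h1)
  haveI hcharp : CharP L p := hrpeq ▸ ringChar.charP L
  haveI : ExpChar L p := ExpChar.prime hp'
  -- basic numerology
  have h1n : 1 ≤ q ^ n := Nat.one_le_pow _ _ (by omega)
  have h2n : 2 ≤ q ^ n := le_trans hq2 (Nat.le_self_pow (by omega) q)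
  have h2qn : q ^ (2 * n) = q ^ n * q ^ n := by rw [two_mul, pow_add]
  have hqq : q ^ n = q * q ^ (n - 1) := by
    conv_lhs => rw [show n = 1 + (n - 1) by omega]
    rw [pow_add, pow_one]
  set m : ℕ := q ^ n + 1 with hm
  -- subfields as root sets
  have hKset : (K : Set L) = {x : L | x ^ q ^ n = x} :=
    aux_subfield_eq_roots K (q ^ n) h2n hKcard
  have hFset : (F : Set L) = {x : L | x ^ q = x} :=
    aux_subfield_eq_roots F q hq2 hFcard
  -- the trace-like map
  set T : L → L := fun z => ∑ i ∈ Finset.range n, z ^ q ^ i with hT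
  -- T z is fixed by the q-th power map whenever z^{q^n} = z
  have hTfix : ∀ z ∈ K, T z ∈ F := by
    intro z hz
    have hzq : z ^ q ^ n = z := by
      have hz' : z ∈ (K : Set L) := hz
      rw [hKset] at hz'
      exact hz'
    suffices hTq : (T z) ^ q = T z by
      have : T z ∈ (F : Set L) := by rw [hFset]; exact hTq
      exact this
    have hfr : (T z) ^ q = ∑ i ∈ Finset.range n, z ^ q ^ (i + 1) := by
      have : (T z) ^ q = iterateFrobenius L p k (T z) := by
        rw [iterateFrobenius_def, hpk]
      rw [this, hT]
      rw [map_sum]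
      apply Finset.sum_congr rfl
      intro i _
      rw [iterateFrobenius_def, hpk, ← pow_mul, ← pow_succ]
    rw [hfr]
    have h1 := Finset.sum_range_succ' (fun i => z ^ q ^ i) n
    have h2 := Finset.sum_range_succ (fun i => z ^ q ^ i) n
    rw [h2] at h1
    simp only [pow_zero, pow_one, hzq] at h1
    exact add_right_cancel h1.symm
  -- finsets
  set KF : Finset L := (K : Set L).toFinset with hKF
  set FF : Finset L := (F : Set L).toFinset with hFF
  have hKFcard : KF.card = q ^ n := by
    rw [hKF, ← Set.ncard_eq_toFinset_card', ← Nat.card_coe_set_eq]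
    exact hKcard
  have hFFcard : FF.card = q := by
    rw [hFF, ← Set.ncard_eq_toFinset_card', ← Nat.card_coe_set_eq]
    exact hFcard
  have hmemKF : ∀ x : L, x ∈ KF ↔ x ∈ K := by intro x; simp [hKF]
  have hmemFF : ∀ x : L, x ∈ FF ↔ x ∈ F := by intro x; simp [hFF]
  -- trace fibers over F all have size q^{n-1}
  have htfib : ∀ c ∈ FF, (KF.filter (fun z => T z = c)).card = q ^ (n - 1) := by
    apply aux_eq_fibers
    · intro c _
      have hsub : (KF.filter (fun z => T z = c)) ⊆
          {z : L | ∑ i ∈ Finset.range n, z ^ q ^ i = c}.toFinset := by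
        intro z hz
        rw [Finset.mem_filter] at hz
        simp only [Set.mem_toFinset, Set.mem_setOf_eq]
        exact hz.2
      calc (KF.filter (fun z => T z = c)).card
          ≤ ({z : L | ∑ i ∈ Finset.range n, z ^ q ^ i = c}.toFinset).card :=
            Finset.card_le_card hsub
        _ = {z : L | ∑ i ∈ Finset.range n, z ^ q ^ i = c}.ncard :=
            (Set.ncard_eq_toFinset_card' _).symm
        _ ≤ q ^ (n - 1) := aux_trace_fiber_le q n hq2 (by omega) c
    · rw [hFFcard, ← hqq, ← hKFcard]
      exact (Finset.card_eq_sum_card_fiberwise (fun z hz => (hmemFF _).mpr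
        (hTfix z ((hmemKF _).mp hz)))).symm
  have hT0 : T 0 = 0 := by
    rw [hT]
    apply Finset.sum_eq_zero
    intro i _
    exact zero_pow (by positivity)
  have h0F : (0 : L) ∈ FF := (hmemFF 0).mpr F.zero_mem
  have htker : (KF.filter (fun z => T z = 0)).card = q ^ (n - 1) := htfib 0 h0F
  -- nonzero kernel elements
  have htker' : (KF.filter (fun z => z ≠ 0 ∧ T z = 0)).card = q ^ (n - 1) - 1 := by
    have h0m : (0 : L) ∈ KF.filter (fun z => T z = 0) := by
      rw [Finset.mem_filter]
      exact ⟨(hmemKF 0).mpr K.zero_mem, hT0⟩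
    have heq : KF.filter (fun z => z ≠ 0 ∧ T z = 0)
        = (KF.filter (fun z => T z = 0)).erase 0 := by
      ext z
      simp only [Finset.mem_filter, Finset.mem_erase]
      tauto
    rw [heq, Finset.card_erase_of_mem h0m, htker]
  -- translate by a
  have htrans : (KF.filter (fun y => y ≠ 0 ∧ T (a * y) = 0)).card
      = (KF.filter (fun z => z ≠ 0 ∧ T z = 0)).card := by
    apply Finset.card_bij' (fun y _ => a * y) (fun z _ => a⁻¹ * z)
    · intro y hy
      rw [Finset.mem_filter] at hy ⊢
      exact ⟨(hmemKF _).mpr (K.mul_mem haK ((hmemKF _).mp hy.1)),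
        mul_ne_zero ha hy.2.1, hy.2.2⟩
    · intro z hz
      rw [Finset.mem_filter] at hz ⊢
      refine ⟨(hmemKF _).mpr (K.mul_mem (K.inv_mem haK) ((hmemKF _).mp hz.1)),
        mul_ne_zero (inv_ne_zero ha) hz.2.1, ?_⟩
      rw [← mul_assoc, mul_inv_cancel₀ ha, one_mul]
      exact hz.2.2
    · intro y _; rw [← mul_assoc, inv_mul_cancel₀ ha, one_mul]
    · intro z _; rw [← mul_assoc, mul_inv_cancel₀ ha, one_mul]
  -- the norm map x ↦ x^m
  have hpowmem : ∀ x : L, x ≠ 0 → x ^ m ∈ K := by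
    intro x hx
    have hx1 : x ^ (q ^ (2 * n) - 1) = 1 := by
      have := FiniteField.pow_card_sub_one_eq_one x hx
      rwa [hcardL] at this
    have harith : m * q ^ n = (q ^ (2 * n) - 1) + m := by
      rw [h2qn, hm]
      have h1 : 1 ≤ q ^ n * q ^ n := Nat.one_le_iff_ne_zero.mpr (by positivity)
      zify [h1]
      ring
    have hfix : (x ^ m) ^ q ^ n = x ^ m := by
      rw [← pow_mul, harith, pow_add, hx1, one_mul]
    have : x ^ m ∈ (K : Set L) := by rw [hKset]; exact hfix
    exact this
  -- fibers of the norm map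
  set A : Finset L := Finset.univ.filter (fun x : L => x ≠ 0) with hA
  have hAmem : ∀ x : L, x ∈ A ↔ x ≠ 0 := by intro x; simp [hA]
  have hAcard : A.card = q ^ (2 * n) - 1 := by
    have : A = Finset.univ.erase 0 := by
      ext x; simp [hA, Finset.mem_erase]
    rw [this, Finset.card_erase_of_mem (Finset.mem_univ 0), Finset.card_univ, hcardL]
  set t : Finset L := KF.filter (fun y => y ≠ 0) with ht
  have htcard : t.card = q ^ n - 1 := by
    have h0K : (0 : L) ∈ KF := (hmemKF 0).mpr K.zero_mem
    have : t = KF.erase 0 := by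
      ext y; rw [ht, Finset.mem_filter, Finset.mem_erase]; tauto
    rw [this, Finset.card_erase_of_mem h0K, hKFcard]
  have hmaps : ∀ x ∈ A, x ^ m ∈ t := by
    intro x hx
    rw [(hAmem x)] at hx
    rw [ht, Finset.mem_filter]
    exact ⟨(hmemKF _).mpr (hpowmem x hx), pow_ne_zero _ hx⟩
  have hfibm : ∀ y ∈ t, (A.filter (fun x => x ^ m = y)).card = m := by
    apply aux_eq_fibers
    · intro y _
      have hsub : A.filter (fun x => x ^ m = y) ⊆ {x : L | x ^ m = y}.toFinset := by
        intro x hx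
        rw [Finset.mem_filter] at hx
        simp only [Set.mem_toFinset, Set.mem_setOf_eq]
        exact hx.2
      calc (A.filter (fun x => x ^ m = y)).card
          ≤ ({x : L | x ^ m = y}.toFinset).card := Finset.card_le_card hsub
        _ = {x : L | x ^ m = y}.ncard := (Set.ncard_eq_toFinset_card' _).symm
        _ ≤ m := aux_pow_fiber_le m (by omega) y
    · have harith2 : q ^ (2 * n) - 1 = (q ^ n - 1) * m := by
        rw [h2qn, hm]
        have h1 : 1 ≤ q ^ n * q ^ n := Nat.one_le_iff_ne_zero.mpr (by positivity)
        zify [h1, h1n]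
        ring
      rw [htcard, ← Finset.card_eq_sum_card_fiberwise hmaps, hAcard]
      exact harith2
  -- assemble
  have hsetfin : {x : L | x ≠ 0 ∧ ∑ i ∈ Finset.range n, (a * x ^ (q ^ n + 1)) ^ q ^ i = 0}
      = ↑(A.filter (fun x => T (a * x ^ m) = 0)) := by
    ext x
    simp only [Set.mem_setOf_eq, Finset.coe_filter, Finset.mem_filter, hAmem x, hT, hm]
  rw [hsetfin, Set.ncard_coe_finset]
  set t' : Finset L := t.filter (fun y => T (a * y) = 0) with ht'
  have hmaps' : ∀ x ∈ A.filter (fun x => T (a * x ^ m) = 0), x ^ m ∈ t' := by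
    intro x hx
    rw [Finset.mem_filter] at hx
    rw [ht', Finset.mem_filter]
    exact ⟨hmaps x hx.1, hx.2⟩
  rw [Finset.card_eq_sum_card_fiberwise hmaps']
  have hfibeq : ∀ y ∈ t', ((A.filter (fun x => T (a * x ^ m) = 0)).filter
      (fun x => x ^ m = y)).card = m := by
    intro y hy
    rw [ht', Finset.mem_filter] at hy
    have : (A.filter (fun x => T (a * x ^ m) = 0)).filter (fun x => x ^ m = y)
        = A.filter (fun x => x ^ m = y) := by
      ext x
      simp only [Finset.mem_filter]
      constructor
      · tauto
      · rintro ⟨hxA, hxm⟩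
        exact ⟨⟨hxA, by rw [hxm]; exact hy.2⟩, hxm⟩
    rw [this]
    exact hfibm y hy.1
  rw [Finset.sum_congr rfl hfibeq, Finset.sum_const, smul_eq_mul]
  have ht'card : t'.card = q ^ (n - 1) - 1 := by
    have : t' = KF.filter (fun y => y ≠ 0 ∧ T (a * y) = 0) := by
      rw [ht', ht, Finset.filter_filter]
    rw [this, htrans, htker']
  rw [ht'card, hm, Nat.mul_comm]
end

section
/- Let a ∈ K be nonzero. Then: (i) for all x, y ∈ L one has Tr_{K/F}(a·((x+y)^{q^n+1} − x^{q^n+1} − y^{q^n+1})) = Tr_{L/F}(a·x·y^{q^n}), i.e. the polar form of the quadratic form x ↦ Tr_{K/F}(a·x^{q^n+1}) is the F-bilinear form B(x,y) = Tr_{L/F}(a·x·y^{q^n}); and (ii) B is nondegenerate: if y ∈ L satisfies Tr_{L/F}(a·x·y^{q^n}) = 0 for every x ∈ L, then y = 0. -/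
/-- For nonzero `a ∈ K`: (i) the polar form of `x ↦ Tr_{K/F}(a * x^(q^n+1))` is
`B(x,y) = Tr_{L/F}(a * x * y^(q^n))`; (ii) `B` is nondegenerate.
Here `Tr_{K/F}(z) = ∑ i < n, z^(q^i)` and `Tr_{L/F}(z) = ∑ i < 2n, z^(q^i)`. -/
theorem stmt2 (q n : ℕ) (hq : IsPrimePow q) (hn : 2 ≤ n)
    (L : Type*) [Field L] [Finite L]
    (F K : Subfield L) (hFK : F ≤ K)
    (hFcard : Nat.card F = q) (hKcard : Nat.card K = q ^ n)
    (hLcard : Nat.card L = q ^ (2 * n))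
    (a : L) (haK : a ∈ K) (ha : a ≠ 0) :
    (∀ x y : L,
      ∑ i ∈ Finset.range n,
          (a * ((x + y) ^ (q ^ n + 1) - x ^ (q ^ n + 1) - y ^ (q ^ n + 1))) ^ q ^ i
        = ∑ i ∈ Finset.range (2 * n), (a * x * y ^ q ^ n) ^ q ^ i) ∧
    (∀ y : L,
      (∀ x : L, ∑ i ∈ Finset.range (2 * n), (a * x * y ^ q ^ n) ^ q ^ i = 0) → y = 0) := by
  classical
  cases nonempty_fintype L
  obtain ⟨p, k, hp, hk, rfl⟩ := hq
  have hpp : p.Prime := hp.nat_prime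
  haveI : Fact p.Prime := ⟨hpp⟩
  set q : ℕ := p ^ k with hqdef
  have hq2 : 2 ≤ q := by
    calc 2 ≤ p := hpp.two_le
    _ = p ^ 1 := (pow_one p).symm
    _ ≤ p ^ k := Nat.pow_le_pow_right hpp.pos hk
  have hcardL : Fintype.card L = q ^ (2 * n) := by
    rw [← Nat.card_eq_fintype_card, hLcard]
  -- characteristic of L is p
  have hcharL : CharP L p := by
    obtain ⟨m, hrp, hm⟩ := FiniteField.card L (ringChar L)
    have hrdvd : ringChar L ∣ p := by
      have h1 : ringChar L ∣ (ringChar L) ^ (m : ℕ) :=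
        dvd_pow_self _ m.pos.ne'
      rw [← hm, hcardL, hqdef, ← pow_mul] at h1
      exact hrp.dvd_of_dvd_pow h1
    have : ringChar L = p := ((Nat.prime_dvd_prime_iff_eq hrp hpp).mp hrdvd)
    exact this ▸ ringChar.charP L
  haveI := hcharL
  -- Frobenius additivity
  have frob : ∀ (u v : L) (i : ℕ), (u + v) ^ q ^ i = u ^ q ^ i + v ^ q ^ i := by
    intro u v i
    rw [hqdef, ← pow_mul]
    exact add_pow_char_pow u v p (k * i)
  -- every element of L satisfies z ^ q ^ (2n) = z
  have hLfix : ∀ z : L, z ^ q ^ (2 * n) = z := by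
    intro z
    have := FiniteField.pow_card z
    rwa [hcardL] at this
  -- every element of K satisfies z ^ q ^ n = z
  have hKfix : ∀ z ∈ K, z ^ q ^ n = z := by
    intro z hz
    haveI : Fintype K := Fintype.ofFinite K
    have hcardK : Fintype.card K = q ^ n := by
      rw [← Nat.card_eq_fintype_card, hKcard]
    have h := FiniteField.pow_card (⟨z, hz⟩ : K)
    rw [hcardK] at h
    have := congrArg (Subtype.val : K → L) h
    simpa using this
  set Q : ℕ := q ^ n with hQ
  constructor
  · intro x y
    have hpolar : (x + y) ^ (Q + 1) - x ^ (Q + 1) - y ^ (Q + 1)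
        = a⁻¹ * ((a * (x ^ Q * y)) + (a * (x * y ^ Q))) := by
      have hfq : (x + y) ^ Q = x ^ Q + y ^ Q := frob x y n
      rw [pow_succ, pow_succ, pow_succ, hfq]
      field_simp
      ring
    have hsplit : ∀ i : ℕ,
        (a * ((x + y) ^ (Q + 1) - x ^ (Q + 1) - y ^ (Q + 1))) ^ q ^ i
        = (a * (x ^ Q * y)) ^ q ^ i + (a * (x * y ^ Q)) ^ q ^ i := by
      intro i
      rw [hpolar, ← mul_assoc, mul_inv_cancel₀ ha, one_mul, frob]
    have hshift : ∀ i : ℕ,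
        (a * x * y ^ Q) ^ q ^ (n + i) = (a * (x ^ Q * y)) ^ q ^ i := by
      intro i
      have hQQ : Q * Q = q ^ (2 * n) := by rw [hQ, ← pow_add, two_mul]
      have hbase : (a * x * y ^ Q) ^ Q = a * (x ^ Q * y) := by
        rw [mul_pow, mul_pow, ← pow_mul, hQQ, hLfix y, hKfix a haK]
        ring
      rw [pow_add, pow_mul, ← hQ, hbase]
    calc ∑ i ∈ Finset.range n,
          (a * ((x + y) ^ (Q + 1) - x ^ (Q + 1) - y ^ (Q + 1))) ^ q ^ i
        = ∑ i ∈ Finset.range n,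
            ((a * (x ^ Q * y)) ^ q ^ i + (a * (x * y ^ Q)) ^ q ^ i) := by
          exact Finset.sum_congr rfl fun i _ => hsplit i
      _ = ∑ i ∈ Finset.range n, (a * x * y ^ Q) ^ q ^ i
            + ∑ i ∈ Finset.range n, (a * x * y ^ Q) ^ q ^ (n + i) := by
          rw [Finset.sum_add_distrib, add_comm]
          congr 1
          · exact Finset.sum_congr rfl fun i _ => by rw [mul_assoc]
          · exact Finset.sum_congr rfl fun i _ => (hshift i).symm
      _ = ∑ i ∈ Finset.range (2 * n), (a * x * y ^ Q) ^ q ^ i := by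
          rw [two_mul, Finset.sum_range_add]
  · intro y hy
    by_contra hy0
    have hc : a * y ^ Q ≠ 0 := mul_ne_zero ha (pow_ne_zero _ hy0)
    -- the "trace" vanishes identically on L
    have hall : ∀ z : L, ∑ i ∈ Finset.range (2 * n), z ^ q ^ i = 0 := by
      intro z
      have h := hy (z * (a * y ^ Q)⁻¹)
      have harg : a * (z * (a * y ^ Q)⁻¹) * y ^ Q = z := by
        field_simp
      rwa [harg] at h
    -- consider the polynomial ∑ X^(q^i)
    set P : Polynomial L := ∑ i ∈ Finset.range (2 * n), Polynomial.X ^ q ^ i with hP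
    have heval : ∀ z : L, P.eval z = 0 := by
      intro z
      rw [hP, Polynomial.eval_finset_sum]
      simpa using hall z
    have hdeg : P.natDegree < Fintype.card L := by
      rw [hcardL]
      refine lt_of_le_of_lt
        (Polynomial.natDegree_sum_le_of_forall_le _ _ (n := q ^ (2 * n - 1)) ?_) ?_
      · intro i hi
        rw [Polynomial.natDegree_X_pow]
        exact Nat.pow_le_pow_right (by omega) (by
          have := Finset.mem_range.mp hi; omega)
      · exact Nat.pow_lt_pow_right hq2 (by omega)
    have hP0 : P = 0 :=
      Polynomial.eq_zero_of_natDegree_lt_card_of_eval_eq_zero P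
        Function.injective_id (fun z => heval z) hdeg
    have hcoeff : P.coeff 1 = 1 := by
      rw [hP, Polynomial.finset_sum_coeff]
      have : ∀ i ∈ Finset.range (2 * n),
          (Polynomial.X ^ q ^ i : Polynomial L).coeff 1 = if i = 0 then 1 else 0 := by
        intro i hi
        rw [Polynomial.coeff_X_pow]
        by_cases h0 : i = 0
        · simp [h0]
        · have : 2 ≤ q ^ i := le_trans hq2 (Nat.le_self_pow h0 q)
          simp only [h0, if_false]
          rw [if_neg (by omega)]
      rw [Finset.sum_congr rfl this, Finset.sum_ite_eq' (Finset.range (2 * n)) 0 (fun _ => (1 : L))]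
      simp [Finset.mem_range]
      omega
    rw [hP0] at hcoeff
    simp at hcoeff
end

section
/- For nonzero elements a, b ∈ K, the zero sets coincide, i.e. {x ∈ L : Tr_{K/F}(a·x^{q^n+1}) = 0} = {x ∈ L : Tr_{K/F}(b·x^{q^n+1}) = 0}, if and only if there exists c ∈ F with a = c·b. (Thus Q_a = Q_b if and only if a/b ∈ F, so one obtains exactly (q^n−1)/(q−1) distinct quadrics Q_a.) -/
open Polynomial in
lemma aux_ncard_pow_eq_self (L : Type*) [Field L] (m : ℕ) (hm : 2 ≤ m) :
    ({z : L | z ^ m = z}).ncard ≤ m := by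
  classical
  set f : L[X] := X ^ m - X with hf
  have hcoeff : f.coeff m = 1 := by
    rw [hf, coeff_sub, coeff_X_pow, coeff_X]
    rw [if_pos rfl, if_neg (by omega)]
    norm_num
  have hf0 : f ≠ 0 := by
    intro h
    rw [h] at hcoeff
    simp at hcoeff
  have hsub : {z : L | z ^ m = z} ⊆ ↑f.roots.toFinset := by
    intro z hz
    simp only [Finset.coe_sort_coe, Multiset.mem_toFinset, Finset.mem_coe]
    rw [mem_roots hf0]
    simp only [IsRoot, hf, eval_sub, eval_pow, eval_X]
    rw [hz]; ring
  calc {z : L | z ^ m = z}.ncard ≤ (↑f.roots.toFinset : Set L).ncard :=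
        Set.ncard_le_ncard hsub (f.roots.toFinset.finite_toSet)
    _ = f.roots.toFinset.card := Set.ncard_coe_finset _
    _ ≤ Multiset.card f.roots := Multiset.toFinset_card_le _
    _ ≤ f.natDegree := card_roots' f
    _ ≤ m := by
        refine (natDegree_sub_le _ _).trans ?_
        simp [natDegree_X_pow]; omega

lemma aux_mem_iff (L : Type*) [Field L] [Finite L] (S : Subfield L) (m : ℕ) (hm : 2 ≤ m)
    (hcard : Nat.card S = m) : ∀ z : L, z ∈ S ↔ z ^ m = z := by
  letI : Fintype S := Fintype.ofFinite S
  have hfwd : ∀ z : L, z ∈ S → z ^ m = z := by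
    intro z hz
    have := FiniteField.pow_card (⟨z, hz⟩ : S)
    rw [Fintype.card_eq_nat_card, hcard] at this
    exact congrArg Subtype.val this
  have hset : (S : Set L) = {z : L | z ^ m = z} := by
    refine Set.eq_of_subset_of_ncard_le (fun z hz => hfwd z hz) ?_
      (Set.Finite.subset (Set.finite_univ) (Set.subset_univ _))
    calc {z : L | z ^ m = z}.ncard ≤ m := aux_ncard_pow_eq_self L m hm
      _ = (S : Set L).ncard := by rw [← hcard, ← Nat.card_coe_set_eq]; rfl
  intro z
  constructor
  · exact hfwd z
  · intro hz
    have : z ∈ (S : Set L) := hset ▸ hz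
    exact this

open Polynomial in
lemma aux_exists_T_ne (L : Type*) [Field L] (q n : ℕ) (hq2 : 2 ≤ q) (hn : 1 ≤ n)
    (hcard : ({z : L | z ^ q ^ n = z}).ncard = q ^ n) :
    ∃ w : L, w ^ q ^ n = w ∧ ∑ i ∈ Finset.range n, w ^ q ^ i ≠ 0 := by
  classical
  by_contra hcon
  push_neg at hcon
  set g : L[X] := ∑ i ∈ Finset.range n, X ^ q ^ i with hg
  have hcoeff : g.coeff 1 = 1 := by
    rw [hg, finset_sum_coeff]
    rw [Finset.sum_eq_single_of_mem 0 (Finset.mem_range.mpr (by omega))]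
    · simp
    · intro i hi hi0
      rw [coeff_X_pow, if_neg]
      have : q ≤ q ^ i := Nat.le_self_pow hi0 q
      omega
  have hg0 : g ≠ 0 := by
    intro h; rw [h] at hcoeff; simp at hcoeff
  have hdeg : g.natDegree ≤ q ^ (n - 1) := by
    refine natDegree_sum_le_of_forall_le _ _ ?_
    intro i hi
    rw [natDegree_X_pow]
    exact Nat.pow_le_pow_right (by omega) (by
      have := Finset.mem_range.mp hi; omega)
  have hsub : {z : L | z ^ q ^ n = z} ⊆ ↑g.roots.toFinset := by
    intro z hz
    simp only [Finset.coe_sort_coe, Multiset.mem_toFinset, Finset.mem_coe]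
    rw [mem_roots hg0]
    have := hcon z hz
    simpa [IsRoot, hg, eval_finset_sum] using this
  have hle : q ^ n ≤ q ^ (n - 1) := by
    calc q ^ n = ({z : L | z ^ q ^ n = z}).ncard := hcard.symm
      _ ≤ (↑g.roots.toFinset : Set L).ncard :=
          Set.ncard_le_ncard hsub (g.roots.toFinset.finite_toSet)
      _ = g.roots.toFinset.card := Set.ncard_coe_finset _
      _ ≤ Multiset.card g.roots := Multiset.toFinset_card_le _
      _ ≤ g.natDegree := card_roots' g
      _ ≤ q ^ (n - 1) := hdeg
  have : q ^ (n - 1) < q ^ n := Nat.pow_lt_pow_right (by omega) (by omega)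
  omega

lemma aux_surj (L : Type*) [Field L] [Finite L] (N : ℕ) (hN : 4 ≤ N)
    (hLcard : Nat.card L = N ^ 2) :
    ∀ y : L, y ^ N = y → ∃ x : L, x ^ (N + 1) = y := by
  intro y hy
  by_cases hy0 : y = 0
  · exact ⟨0, by rw [hy0, zero_pow (by omega)]⟩
  letI : Fintype L := Fintype.ofFinite L
  obtain ⟨g, hg⟩ := IsCyclic.exists_generator (α := Lˣ)
  set u : Lˣ := Units.mk0 y hy0 with hu
  obtain ⟨m, hm'⟩ := mem_powers_iff_mem_zpowers.mpr (hg u)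
  have hm : g ^ m = u := hm'
  have horder : orderOf g = N ^ 2 - 1 := by
    rw [orderOf_eq_card_of_forall_mem_zpowers hg, Nat.card_units, hLcard]
  have hypow : y ^ (N - 1) = 1 := by
    have h1 : y ^ (N - 1) * y = y := by
      rw [← pow_succ]
      have : N - 1 + 1 = N := by omega
      rw [this, hy]
    have := mul_right_cancel₀ hy0 (h1.trans (one_mul y).symm)
    exact this
  have hupow : u ^ (N - 1) = 1 := by
    ext
    simpa [hu] using hypow
  have hdvd : (N ^ 2 - 1) ∣ m * (N - 1) := by
    rw [← horder]
    apply orderOf_dvd_of_pow_eq_one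
    rw [pow_mul, hm, hupow]
  obtain ⟨M, hM⟩ : ∃ M : ℕ, N = M + 1 := ⟨N - 1, by omega⟩
  have hfactor : N ^ 2 - 1 = (N + 1) * (N - 1) := by
    subst hM
    have e1 : M + 1 + 1 = M + 2 := rfl
    have e2 : M + 1 - 1 = M := rfl
    rw [e1, e2]
    have : (M + 1) ^ 2 = (M + 2) * M + 1 := by ring
    omega
  rw [hfactor] at hdvd
  have hM0 : 0 < N - 1 := by omega
  have hdvd2 : (N + 1) ∣ m := (Nat.mul_dvd_mul_iff_right hM0).mp hdvd
  obtain ⟨t, ht⟩ := hdvd2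
  refine ⟨↑(g ^ t), ?_⟩
  have h2 : (g ^ t) ^ (N + 1) = u := by
    rw [← pow_mul, mul_comm t (N + 1), ← ht, hm]
  have := congrArg (Units.val) h2
  rw [Units.val_pow_eq_pow_val, Units.val_pow_eq_pow_val] at this
  exact this

lemma aux_sum_pow {L : Type*} [CommRing L] (p : ℕ) [Fact p.Prime] [CharP L p] (k : ℕ)
    {ι : Type*} (s : Finset ι) (f : ι → L) :
    (∑ i ∈ s, f i) ^ p ^ k = ∑ i ∈ s, (f i) ^ p ^ k := by
  classical
  induction s using Finset.induction with
  | empty =>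
      simp only [Finset.sum_empty]
      exact zero_pow (pow_ne_zero k (Fact.out : p.Prime).pos.ne')
  | insert _ _ h ih => rw [Finset.sum_insert h, add_pow_char_pow, ih, Finset.sum_insert h]

/-- For nonzero `a, b ∈ K`, the zero sets of `x ↦ Tr_{K/F}(a * x^(q^n+1))` and
`x ↦ Tr_{K/F}(b * x^(q^n+1))` coincide if and only if `a = c * b` for some `c ∈ F`.
Here `Tr_{K/F}(z) = ∑ i < n, z^(q^i)` for `z ∈ K`. -/
theorem stmt3 (q n : ℕ) (hq : IsPrimePow q) (hn : 2 ≤ n)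
    (L : Type*) [Field L] [Finite L]
    (F K : Subfield L) (hFK : F ≤ K)
    (hFcard : Nat.card F = q) (hKcard : Nat.card K = q ^ n)
    (hLcard : Nat.card L = q ^ (2 * n))
    (a b : L) (haK : a ∈ K) (hbK : b ∈ K) (ha : a ≠ 0) (hb : b ≠ 0) :
    {x : L | ∑ i ∈ Finset.range n, (a * x ^ (q ^ n + 1)) ^ q ^ i = 0}
      = {x : L | ∑ i ∈ Finset.range n, (b * x ^ (q ^ n + 1)) ^ q ^ i = 0}
    ↔ ∃ c ∈ F, a = c * b := by
  classical
  obtain ⟨p, k, hp, hk, hpk⟩ := hq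
  haveI hpfact : Fact p.Prime := ⟨Nat.prime_iff.mpr hp⟩
  have hq2 : 2 ≤ q := by
    rw [← hpk]
    calc 2 ≤ p := hpfact.out.two_le
      _ = p ^ 1 := (pow_one p).symm
      _ ≤ p ^ k := Nat.pow_le_pow_right hpfact.out.pos hk
  letI : Fintype L := Fintype.ofFinite L
  -- characteristic
  haveI hcharL : CharP L p := by
    haveI := ringChar.charP L
    have h1 : (ringChar L) ∣ q ^ (2 * n) := by
      apply ringChar.dvd
      push_cast
      rw [← Nat.cast_pow, ← hLcard, Nat.card_eq_fintype_card]
      exact FiniteField.cast_card_eq_zero L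
    have hprime : (ringChar L).Prime := CharP.char_is_prime L (ringChar L)
    have h2 : ringChar L ∣ p := by
      rw [← hpk, ← pow_mul] at h1
      exact hprime.dvd_of_dvd_pow h1
    exact ringChar.of_eq ((Nat.prime_dvd_prime_iff_eq hprime hpfact.out).mp h2)
  have hqi : ∀ i : ℕ, q ^ i = p ^ (k * i) := fun i => by rw [← hpk, ← pow_mul]
  have hadd : ∀ (x y : L) (i : ℕ), (x + y) ^ q ^ i = x ^ q ^ i + y ^ q ^ i := by
    intro x y i; rw [hqi i]; exact add_pow_char_pow (p := p) x y (k * i)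
  have hsubp : ∀ (x y : L) (i : ℕ), (x - y) ^ q ^ i = x ^ q ^ i - y ^ q ^ i := by
    intro x y i; rw [hqi i]; exact sub_pow_char_pow (p := p) x y (k * i)
  have hsumpow : ∀ (s : Finset ℕ) (f : ℕ → L) (i : ℕ),
      (∑ j ∈ s, f j) ^ q ^ i = ∑ j ∈ s, (f j) ^ q ^ i := by
    intro s f i; rw [hqi i]; exact aux_sum_pow p (k * i) s f
  set N := q ^ n with hN
  have hN4 : 4 ≤ N := by
    rw [hN]
    calc 4 = 2 ^ 2 := rfl
      _ ≤ q ^ 2 := Nat.pow_le_pow_left hq2 2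
      _ ≤ q ^ n := Nat.pow_le_pow_right (by omega) hn
  have hKmem : ∀ z : L, z ∈ K ↔ z ^ N = z := aux_mem_iff L K N (by omega) (by rw [hKcard, hN])
  have hFmem : ∀ z : L, z ∈ F ↔ z ^ q = z := aux_mem_iff L F q hq2 hFcard
  set T : L → L := fun z => ∑ i ∈ Finset.range n, z ^ q ^ i with hTdef
  have hfix : ∀ c : L, c ^ q = c → ∀ i : ℕ, c ^ q ^ i = c := by
    intro c hc i
    induction i with
    | zero => simp
    | succ j ih => rw [pow_succ, pow_mul, ih, hc]
  have hTsub : ∀ x y : L, T (x - y) = T x - T y := by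
    intro x y
    simp only [hTdef]
    rw [← Finset.sum_sub_distrib]
    exact Finset.sum_congr rfl fun i _ => hsubp x y i
  have hTsmul : ∀ c z : L, c ^ q = c → T (c * z) = c * T z := by
    intro c z hc
    simp only [hTdef]
    rw [Finset.mul_sum]
    refine Finset.sum_congr rfl fun i _ => ?_
    rw [mul_pow, hfix c hc i]
  have hTF : ∀ y : L, y ^ N = y → (T y) ^ q = T y := by
    intro y hy
    have h1 : (T y) ^ q = ∑ i ∈ Finset.range n, y ^ q ^ (i + 1) := by
      have := hsumpow (Finset.range n) (fun i => y ^ q ^ i) 1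
      rw [pow_one] at this
      simp only [hTdef]
      rw [this]
      refine Finset.sum_congr rfl fun i _ => ?_
      rw [← pow_mul, ← pow_succ]
    rw [h1]
    have e1 := Finset.sum_range_succ' (fun i => y ^ q ^ i) n
    have e2 := Finset.sum_range_succ (fun i => y ^ q ^ i) n
    have e3 : (∑ i ∈ Finset.range n, y ^ q ^ (i + 1)) + y ^ q ^ 0
        = (∑ i ∈ Finset.range n, y ^ q ^ i) + y ^ q ^ n := e1.symm.trans e2
    rw [pow_zero, pow_one, ← hN, hy] at e3
    simp only [hTdef]
    exact add_right_cancel e3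
  have hcardset : ({z : L | z ^ q ^ n = z}).ncard = q ^ n := by
    have h1 : {z : L | z ^ q ^ n = z} = (K : Set L) := by
      ext z
      simp only [Set.mem_setOf_eq, SetLike.mem_coe]
      rw [hKmem z, hN]
    rw [h1, ← Nat.card_coe_set_eq]
    exact hKcard
  obtain ⟨w, hwN, hwT⟩ := aux_exists_T_ne L q n hq2 (by omega) hcardset
  rw [← hN] at hwN
  have hwT' : T w ≠ 0 := hwT
  have hsurjL : ∀ y : L, y ^ N = y → ∃ x : L, x ^ (N + 1) = y := by
    apply aux_surj L N hN4
    rw [hLcard, hN, ← pow_mul, Nat.mul_comm n 2]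
  have haN : a ^ N = a := (hKmem a).1 haK
  have hbN : b ^ N = b := (hKmem b).1 hbK
  constructor
  · intro hset
    have key : ∀ y : L, y ^ N = y → (T (a * y) = 0 ↔ T (b * y) = 0) := by
      intro y hy
      obtain ⟨x, rfl⟩ := hsurjL y hy
      have hx := Set.ext_iff.mp hset x
      simp only [Set.mem_setOf_eq] at hx
      exact hx
    set y0 : L := b⁻¹ * w with hy0
    have hbinvN : (b⁻¹ : L) ^ N = b⁻¹ := by rw [inv_pow, hbN]
    have hy0N : y0 ^ N = y0 := by rw [hy0, mul_pow, hbinvN, hwN]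
    have hby0 : b * y0 = w := by
      rw [hy0, ← mul_assoc, mul_inv_cancel₀ hb, one_mul]
    have he0ne : T (b * y0) ≠ 0 := by rw [hby0]; exact hwT'
    have hay0N : (a * y0) ^ N = a * y0 := by rw [mul_pow, haN, hy0N]
    have hby0N : (b * y0) ^ N = b * y0 := by rw [mul_pow, hbN, hy0N]
    have hTa0 : (T (a * y0)) ^ q = T (a * y0) := hTF _ hay0N
    have hTb0 : (T (b * y0)) ^ q = T (b * y0) := hTF _ hby0N
    set c : L := T (a * y0) * (T (b * y0))⁻¹ with hc
    have hcq : c ^ q = c := by rw [hc, mul_pow, inv_pow, hTa0, hTb0]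
    have hcN : c ^ N = c := by rw [hN]; exact hfix c hcq n
    have claim : ∀ y : L, y ^ N = y → T ((a - c * b) * y) = 0 := by
      intro y hy
      have hsplit : T ((a - c * b) * y) = T (a * y) - c * T (b * y) := by
        have h1 : (a - c * b) * y = a * y - c * (b * y) := by ring
        rw [h1, hTsub, hTsmul c (b * y) hcq]
      by_cases h0 : T (b * y) = 0
      · rw [hsplit, (key y hy).2 h0, h0, mul_zero, sub_zero]
      · set s : L := T (b * y) * (T (b * y0))⁻¹ with hs
        have hbyN : (b * y) ^ N = b * y := by rw [mul_pow, hbN, hy]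
        have hTbyq : (T (b * y)) ^ q = T (b * y) := hTF _ hbyN
        have hsq : s ^ q = s := by rw [hs, mul_pow, inv_pow, hTbyq, hTb0]
        have hsN : s ^ N = s := by rw [hN]; exact hfix s hsq n
        have hy'N : (y - s * y0) ^ N = y - s * y0 := by
          rw [hN, hsubp, mul_pow, ← hN, hsN, hy0N, hy]
        have hTb' : T (b * (y - s * y0)) = 0 := by
          have h1 : b * (y - s * y0) = b * y - s * (b * y0) := by ring
          rw [h1, hTsub, hTsmul s (b * y0) hsq, hs,
            mul_assoc, inv_mul_cancel₀ he0ne, mul_one, sub_self]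
        have hTa' : T (a * (y - s * y0)) = 0 := (key _ hy'N).2 hTb'
        have hTay : T (a * y) = s * T (a * y0) := by
          have h1 : a * (y - s * y0) = a * y - s * (a * y0) := by ring
          rw [h1, hTsub, hTsmul s (a * y0) hsq] at hTa'
          exact sub_eq_zero.mp hTa'
        rw [hsplit, hTay, hs, hc]
        ring
    have hd0 : a - c * b = 0 := by
      by_contra hne
      have hdN : (a - c * b) ^ N = a - c * b := by
        rw [hN, hsubp, mul_pow, ← hN, haN, hcN, hbN]
      have hdiN : ((a - c * b)⁻¹) ^ N = (a - c * b)⁻¹ := by rw [inv_pow, hdN]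
      have h3 := claim ((a - c * b)⁻¹ * w) (by rw [mul_pow, hdiN, hwN])
      rw [← mul_assoc, mul_inv_cancel₀ hne, one_mul] at h3
      exact hwT' h3
    exact ⟨c, (hFmem c).2 hcq, sub_eq_zero.mp hd0⟩
  · rintro ⟨c, hcF, rfl⟩
    have hc0 : c ≠ 0 := left_ne_zero_of_mul ha
    have hcq : c ^ q = c := (hFmem c).1 hcF
    ext x
    simp only [Set.mem_setOf_eq]
    have h1 : T (c * b * x ^ (N + 1)) = c * T (b * x ^ (N + 1)) := by
      rw [mul_assoc]
      exact hTsmul c _ hcq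
    show T (c * b * x ^ (N + 1)) = 0 ↔ T (b * x ^ (N + 1)) = 0
    rw [h1, mul_eq_zero]
    simp [hc0]
end

section
/- For all a ∈ K, x ∈ L, c ∈ F and j ∈ ℕ: if Tr_{K/F}(a·x^{q^n+1}) = 0 then Tr_{K/F}(a·(c·ξ^j·x)^{q^n+1}) = 0. (Consequently every orbit of the group generated by ξ on the points of PG(2n−1,q) is either contained in or disjoint from the quadric Q_a.) -/
/-- For all `a ∈ K`, `x ∈ L`, `c ∈ F` and `j : ℕ`: if `Tr_{K/F}(a * x^(q^n+1)) = 0`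
then `Tr_{K/F}(a * (c * ξ^j * x)^(q^n+1)) = 0`; hence every `⟨ξ⟩`-orbit is contained in
or disjoint from the quadric `Q_a`. Here `Tr_{K/F}(z) = ∑ i < n, z^(q^i)` for `z ∈ K`. -/
theorem stmt6 (q n : ℕ) (hq : IsPrimePow q) (hn : 2 ≤ n)
    (L : Type*) [Field L] [Finite L]
    (F K : Subfield L) (hFK : F ≤ K)
    (hFcard : Nat.card F = q) (hKcard : Nat.card K = q ^ n)
    (hLcard : Nat.card L = q ^ (2 * n))
    (β : L) (hβ : orderOf β = q ^ (2 * n) - 1)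
    (ξ : L) (hξ : ξ = β ^ ((q ^ n - 1) / (q - 1))) :
    ∀ a ∈ K, ∀ x : L, ∀ c ∈ F, ∀ j : ℕ,
      (∑ i ∈ Finset.range n, (a * x ^ (q ^ n + 1)) ^ q ^ i = 0) →
      ∑ i ∈ Finset.range n, (a * (c * ξ ^ j * x) ^ (q ^ n + 1)) ^ q ^ i = 0 := by
  intro a ha x c hc j h0
  have hq2 : 2 ≤ q := hq.two_le
  -- fixed points of Frobenius stay fixed under all its powers
  have key : ∀ y : L, y ^ q = y → ∀ k : ℕ, y ^ q ^ k = y := by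
    intro y hy k
    induction k with
    | zero => simp
    | succ k ih => rw [pow_succ, pow_mul, ih, hy]
  -- c is fixed by the Frobenius
  haveI : Fintype F := Fintype.ofFinite F
  have hcq : c ^ q = c := by
    have h := FiniteField.pow_card (⟨c, hc⟩ : F)
    rw [← Nat.card_eq_fintype_card, hFcard] at h
    have := congrArg Subtype.val h
    simpa using this
  -- ξ^(q^n+1) is fixed by the Frobenius
  set μ : L := ξ ^ (q ^ n + 1) with hμdef
  have hm1 : 1 ≤ q ^ n := Nat.one_le_pow _ _ (by omega)
  have hdvd : (q - 1) ∣ (q ^ n - 1) := by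
    simpa using Nat.sub_dvd_pow_sub_pow q 1 n
  have he : (q ^ n - 1) / (q - 1) * (q - 1) = q ^ n - 1 := Nat.div_mul_cancel hdvd
  have hmm : (q ^ n - 1) * (q ^ n + 1) = q ^ (2 * n) - 1 := by
    have h2 : q ^ (2 * n) = q ^ n * q ^ n := by
      rw [two_mul, pow_add]
    have hm2 : 1 ≤ q ^ n * q ^ n := Nat.one_le_iff_ne_zero.mpr (by positivity)
    rw [h2]
    zify [hm1, hm2]
    ring
  have hμpow : μ ^ (q - 1) = 1 := by
    rw [hμdef, hξ, ← pow_mul, ← pow_mul]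
    have harith : (q ^ n - 1) / (q - 1) * ((q ^ n + 1) * (q - 1)) = q ^ (2 * n) - 1 := by
      calc (q ^ n - 1) / (q - 1) * ((q ^ n + 1) * (q - 1))
          = (q ^ n - 1) / (q - 1) * (q - 1) * (q ^ n + 1) := by ring
        _ = (q ^ n - 1) * (q ^ n + 1) := by rw [he]
        _ = q ^ (2 * n) - 1 := hmm
    rw [harith, ← hβ]
    exact pow_orderOf_eq_one β
  have hμq : μ ^ q = μ := by
    have : q = (q - 1) + 1 := by omega
    rw [this, pow_succ, hμpow, one_mul]
  -- the scalar λ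
  set lam : L := c ^ 2 * μ ^ j with hlamdef
  have hlamq : lam ^ q = lam := by
    rw [hlamdef, mul_pow, ← pow_mul, ← pow_mul, mul_comm 2 q, mul_comm j q,
      pow_mul, pow_mul, hcq, hμq]
  -- factor the quadric value
  have hfactor : a * (c * ξ ^ j * x) ^ (q ^ n + 1) = lam * (a * x ^ (q ^ n + 1)) := by
    have hcn : c ^ (q ^ n) = c := key c hcq n
    have : (ξ ^ j) ^ (q ^ n + 1) = μ ^ j := by
      rw [hμdef, ← pow_mul, ← pow_mul, mul_comm]
    rw [mul_pow, mul_pow, this]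
    rw [pow_add c, hcn, pow_one]
    rw [hlamdef]
    ring
  calc ∑ i ∈ Finset.range n, (a * (c * ξ ^ j * x) ^ (q ^ n + 1)) ^ q ^ i
      = ∑ i ∈ Finset.range n, lam * (a * x ^ (q ^ n + 1)) ^ q ^ i := by
        refine Finset.sum_congr rfl fun i _ => ?_
        rw [hfactor, mul_pow, key lam hlamq i]
    _ = lam * ∑ i ∈ Finset.range n, (a * x ^ (q ^ n + 1)) ^ q ^ i := by
        rw [Finset.mul_sum]
    _ = 0 := by rw [h0, mul_zero]
end

section
/- For nonzero elements x, y ∈ L, the following are equivalent: (i) there exist j ∈ ℕ and c ∈ F with c ≠ 0 such that y = c·ξ^j·x; (ii) there exists d ∈ F with y^{q^n+1} = d·x^{q^n+1}. (Thus the ⟨ξ⟩-orbit through x is exactly the set of points whose norms are F-proportional to the norm of x; in particular each orbit is the intersection of the n−1 linearly independent quadrics Q_a containing one of its points.) -/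
/-- For nonzero `x, y ∈ L`: `y` lies in the `F`-scalar-closed `⟨ξ⟩`-orbit of `x`
(i.e. `y = c * ξ^j * x` for some `j` and nonzero `c ∈ F`) if and only if
`y^(q^n+1) = d * x^(q^n+1)` for some `d ∈ F`. -/
theorem stmt7 (q n : ℕ) (hq : IsPrimePow q) (hn : 2 ≤ n)
    (L : Type*) [Field L] [Finite L]
    (F K : Subfield L) (hFK : F ≤ K)
    (hFcard : Nat.card F = q) (hKcard : Nat.card K = q ^ n)
    (hLcard : Nat.card L = q ^ (2 * n))
    (β : L) (hβ : orderOf β = q ^ (2 * n) - 1)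
    (ξ : L) (hξ : ξ = β ^ ((q ^ n - 1) / (q - 1)))
    (x y : L) (hx : x ≠ 0) (hy : y ≠ 0) :
    (∃ j : ℕ, ∃ c ∈ F, c ≠ 0 ∧ y = c * ξ ^ j * x) ↔
    (∃ d ∈ F, y ^ (q ^ n + 1) = d * x ^ (q ^ n + 1)) := by
  classical
  have := Fintype.ofFinite L
  have hq2 : 2 ≤ q := hq.two_le
  have hqn1 : 1 ≤ q ^ n := Nat.one_le_pow _ _ (by omega)
  -- basic arithmetic
  have hdvd : q - 1 ∣ q ^ n - 1 := by
    simpa using Nat.sub_dvd_pow_sub_pow q 1 n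
  set e : ℕ := (q ^ n - 1) / (q - 1) with he
  have hee : e * (q - 1) = q ^ n - 1 := Nat.div_mul_cancel hdvd
  have hN : (q ^ n - 1) * (q ^ n + 1) = q ^ (2 * n) - 1 := by
    have : q ^ (2 * n) = (q ^ n) ^ 2 := by rw [← pow_mul, mul_comm]
    rw [this]
    have := sq_tsub_sq (q ^ n) 1
    simp only [one_pow] at this
    rw [this, mul_comm]
  -- q-1 pow lemma for elements of F
  have hFone : ∀ c : L, c ∈ F → c ≠ 0 → c ^ (q - 1) = 1 := by
    intro c hc hc0
    have : Fintype.card F = q := by rw [← Nat.card_eq_fintype_card, hFcard]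
    have h := FiniteField.pow_card_sub_one_eq_one (⟨c, hc⟩ : F)
      (by simpa using Subtype.coe_ne_coe.mp (by simpa using hc0))
    rw [this] at h
    have := congrArg (Subtype.val) h
    simpa using this
  -- membership lemma: z^(q-1) = 1 → z ∈ F
  have hmem : ∀ z : L, z ^ (q - 1) = 1 → z ∈ F := by
    intro z hz
    have hq1pos : 0 < q - 1 := by omega
    set S : Finset L := (Polynomial.nthRoots (q - 1) (1 : L)).toFinset with hS
    have hzS : z ∈ S := by
      rw [hS, Multiset.mem_toFinset, Polynomial.mem_nthRoots hq1pos]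
      exact hz
    have hScard : S.card ≤ q - 1 := by
      refine le_trans (Multiset.toFinset_card_le _) ?_
      simpa using Polynomial.card_nthRoots (q - 1) (1 : L)
    have hFfin : (F : Set L).Finite := Set.toFinite _
    set Fs : Finset L := hFfin.toFinset with hFs
    have hFsmem : ∀ w : L, w ∈ Fs ↔ w ∈ F := by
      intro w; rw [hFs, Set.Finite.mem_toFinset]; rfl
    have hFscard : Fs.card = q := by
      rw [← hFcard]
      have h1 : (F : Set L).ncard = Fs.card := by
        rw [hFs]; exact Set.ncard_eq_toFinset_card _ hFfin
      rw [← h1, ← Nat.card_coe_set_eq]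
      rfl
    have h0F : (0 : L) ∈ Fs := (hFsmem 0).mpr (zero_mem F)
    have hsub : Fs.erase 0 ⊆ S := by
      intro w hw
      have hw0 : w ≠ 0 := Finset.ne_of_mem_erase hw
      have hwF : w ∈ F := (hFsmem w).mp (Finset.mem_of_mem_erase hw)
      rw [hS, Multiset.mem_toFinset, Polynomial.mem_nthRoots hq1pos]
      exact hFone w hwF hw0
    have hcard2 : (Fs.erase 0).card = q - 1 := by
      rw [Finset.card_erase_of_mem h0F, hFscard]
    have : Fs.erase 0 = S :=
      Finset.eq_of_subset_of_card_le hsub (by omega)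
    have : z ∈ Fs.erase 0 := this ▸ hzS
    exact (hFsmem z).mp (Finset.mem_of_mem_erase this)
  -- β is a generator
  have hβ0 : β ≠ 0 := by
    intro h
    have : orderOf β = 0 := by
      rw [h]; exact orderOf_eq_zero (by
        intro hf
        obtain ⟨k, hk, hk1⟩ := hf.exists_pow_eq_one
        exact one_ne_zero ((zero_pow (by omega)).symm.trans hk1).symm)
    rw [hβ] at this
    have : q ^ (2 * n) ≤ 1 := by omega
    have h4 : 2 ^ (2 * n) ≤ q ^ (2 * n) := Nat.pow_le_pow_left hq2 _
    have : (4:ℕ) ≤ 2 ^ (2 * n) := by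
      calc (4:ℕ) = 2 ^ 2 := rfl
      _ ≤ 2 ^ (2 * n) := Nat.pow_le_pow_right (by omega) (by omega)
    omega
  set b : Lˣ := Units.mk0 β hβ0 with hb
  have hbord : orderOf b = q ^ (2 * n) - 1 := by
    rw [← hβ, ← orderOf_units]; rfl
  have hbgen : ∀ u : Lˣ, ∃ m : ℕ, b ^ m = u := by
    intro u
    have hcardU : Nat.card Lˣ = q ^ (2 * n) - 1 := by
      rw [Nat.card_units, hLcard]
    have : Subgroup.zpowers b = ⊤ := by
      apply Subgroup.eq_top_of_card_eq
      rw [Nat.card_zpowers, hbord, hcardU]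
    have hu : u ∈ Subgroup.zpowers b := this ▸ Subgroup.mem_top u
    have hu' : u ∈ Submonoid.powers b := mem_powers_iff_mem_zpowers.mpr hu
    obtain ⟨m, hm⟩ := hu'
    exact ⟨m, hm⟩
  -- ξ^(q^n+1) has (q-1)-th power 1
  have hξpow : (ξ ^ (q ^ n + 1)) ^ (q - 1) = 1 := by
    rw [hξ, ← pow_mul, ← pow_mul]
    have h2 : e * ((q ^ n + 1) * (q - 1)) = q ^ (2 * n) - 1 := by
      rw [← mul_assoc, mul_right_comm, hee, hN]
    rw [h2, ← hβ, pow_orderOf_eq_one]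
  have hξ0 : ξ ≠ 0 := by
    rw [hξ]; exact pow_ne_zero _ hβ0
  constructor
  · rintro ⟨j, c, hcF, hc0, rfl⟩
    refine ⟨c ^ (q ^ n + 1) * (ξ ^ (q ^ n + 1)) ^ j, ?_, ?_⟩
    · exact mul_mem (pow_mem hcF _) (pow_mem (hmem _ hξpow) _)
    · rw [mul_pow, mul_pow, ← pow_mul, mul_comm j (q ^ n + 1), pow_mul]
      try ring
  · rintro ⟨d, hdF, hd⟩
    have hd0 : d ≠ 0 := by
      intro h
      rw [h, zero_mul] at hd
      exact pow_ne_zero _ hy hd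
    set z : L := y * x⁻¹ with hz
    have hz0 : z ≠ 0 := mul_ne_zero hy (inv_ne_zero hx)
    have hzpow : z ^ (q ^ n + 1) = d := by
      rw [hz, mul_pow, inv_pow, hd, mul_assoc, mul_inv_cancel₀ (pow_ne_zero _ hx), mul_one]
    obtain ⟨m, hm⟩ := hbgen (Units.mk0 z hz0)
    have hmz : β ^ m = z := by
      have := congrArg Units.val hm
      simpa [hb] using this
    -- β ^ (m * (q^n+1) * (q-1)) = 1
    have hone : β ^ (m * ((q ^ n + 1) * (q - 1))) = 1 := by
      rw [← mul_assoc, pow_mul, pow_mul, hmz, hzpow]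
      exact hFone d hdF hd0
    have hdvd2 : q ^ (2 * n) - 1 ∣ m * ((q ^ n + 1) * (q - 1)) := by
      rw [← hβ]; exact orderOf_dvd_of_pow_eq_one hone
    have hNfact : q ^ (2 * n) - 1 = e * ((q ^ n + 1) * (q - 1)) := by
      rw [← hN, ← hee]; ring
    have hedvd : e ∣ m := by
      rw [hNfact] at hdvd2
      have hpos : 0 < (q ^ n + 1) * (q - 1) := by
        apply Nat.mul_pos <;> omega
      exact (Nat.mul_dvd_mul_iff_right hpos).mp hdvd2
    obtain ⟨j, hj⟩ := hedvd
    refine ⟨j, 1, one_mem F, one_ne_zero, ?_⟩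
    rw [one_mul, hξ, ← pow_mul, ← hj, hmz, hz, mul_assoc,
      inv_mul_cancel₀ hx, mul_one]
end

section
/- Suppose n is even. Let u, v, w be powers of ξ (i.e. u = ξ^i, v = ξ^j, w = ξ^k for some natural numbers i, j, k) such that none of the ratios u/v, v/w, u/w lies in F. Then u, v, w are linearly independent over F: if λ·u + μ·v + ν·w = 0 with λ, μ, ν ∈ F, then λ = μ = ν = 0. (Equivalently, when n is even every ⟨ξ⟩-orbit on PG(2n−1,q) is a cap: no three of its points are collinear.) -/
private lemma memF_iff' {L : Type*} [Field L] [Finite L] (F : Subfield L) (q : ℕ)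
    (hq2 : 2 ≤ q) (hcard : Nat.card F = q) (x : L) : x ∈ F ↔ x ^ q = x := by
  classical
  cases nonempty_fintype L
  have hFcard : Fintype.card F = q := by rw [← Nat.card_eq_fintype_card, hcard]
  have hpowF : ∀ y : F, ((y : L)) ^ q = (y : L) := by
    intro y
    have h := FiniteField.pow_card y
    rw [hFcard] at h
    exact_mod_cast congrArg Subtype.val h
  constructor
  · intro hx
    exact hpowF ⟨x, hx⟩
  · intro hx
    set f : Polynomial L := Polynomial.X ^ q - Polynomial.X with hf
    have hdeg : f.natDegree = q := by
      rw [hf, Polynomial.natDegree_sub_eq_left_of_natDegree_lt, Polynomial.natDegree_X_pow]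
      rw [Polynomial.natDegree_X_pow, Polynomial.natDegree_X]; omega
    have hfne : f ≠ 0 := by
      intro h; rw [h] at hdeg; simp at hdeg; omega
    have hroot : ∀ z : L, z ^ q = z → z ∈ f.roots.toFinset := by
      intro z hz
      rw [Multiset.mem_toFinset, Polynomial.mem_roots hfne]
      simp [hf, Polynomial.IsRoot, sub_eq_zero, hz]
    set T : Finset L := Finset.univ.image (fun y : F => (y : L)) with hT
    have hTcard : T.card = q := by
      rw [hT, Finset.card_image_of_injective _ Subtype.val_injective, Finset.card_univ, hFcard]
    have hsub : T ⊆ f.roots.toFinset := by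
      intro z hz
      rw [hT, Finset.mem_image] at hz
      obtain ⟨y, -, rfl⟩ := hz
      exact hroot _ (hpowF y)
    have hle : f.roots.toFinset.card ≤ T.card := by
      rw [hTcard]
      calc f.roots.toFinset.card ≤ Multiset.card f.roots := f.roots.toFinset_card_le
        _ ≤ f.natDegree := Polynomial.card_roots' f
        _ = q := hdeg
    have heqset := Finset.eq_of_subset_of_card_le hsub hle
    have hxT : x ∈ T := heqset ▸ hroot x hx
    rw [hT, Finset.mem_image] at hxT
    obtain ⟨y, -, hy⟩ := hxT
    rw [← hy]; exact y.2

private lemma quad3' {L : Type*} [Field L] (c2 c1 c0 x y z : L) (hc2 : c2 ≠ 0)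
    (hx : c2 * x ^ 2 + c1 * x + c0 = 0) (hy : c2 * y ^ 2 + c1 * y + c0 = 0)
    (hz : c2 * z ^ 2 + c1 * z + c0 = 0)
    (hxy : x ≠ y) (hxz : x ≠ z) (hyz : y ≠ z) : False := by
  have h1 : c2 * (x + y) + c1 = 0 := by
    have hne : x - y ≠ 0 := sub_ne_zero.mpr hxy
    apply mul_left_cancel₀ hne
    rw [mul_zero]
    linear_combination hx - hy
  have h2 : c2 * (x + z) + c1 = 0 := by
    have hne : x - z ≠ 0 := sub_ne_zero.mpr hxz
    apply mul_left_cancel₀ hne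
    rw [mul_zero]
    linear_combination hx - hz
  have h3 : c2 * (y - z) = 0 := by linear_combination h1 - h2
  rcases mul_eq_zero.mp h3 with h | h
  · exact hc2 h
  · exact hyz (sub_eq_zero.mp h)

/-- Suppose `n` is even. If `u, v, w` are powers of `ξ` with none of the ratios
`u/v`, `v/w`, `u/w` in `F`, then `u, v, w` are linearly independent over `F`:
every `⟨ξ⟩`-orbit on `PG(2n-1,q)` is a cap when `n` is even. -/
theorem stmt9 (q n : ℕ) (hq : IsPrimePow q) (hn : 2 ≤ n) (hneven : Even n)
    (L : Type*) [Field L] [Finite L]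
    (F K : Subfield L) (hFK : F ≤ K)
    (hFcard : Nat.card F = q) (hKcard : Nat.card K = q ^ n)
    (hLcard : Nat.card L = q ^ (2 * n))
    (β : L) (hβ : orderOf β = q ^ (2 * n) - 1)
    (ξ : L) (hξ : ξ = β ^ ((q ^ n - 1) / (q - 1)))
    (u v w : L) (hu : ∃ i : ℕ, u = ξ ^ i) (hv : ∃ j : ℕ, v = ξ ^ j)
    (hw : ∃ k : ℕ, w = ξ ^ k)
    (huv : u / v ∉ F) (hvw : v / w ∉ F) (huw : u / w ∉ F) :
    ∀ lam mu nu : L, lam ∈ F → mu ∈ F → nu ∈ F →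
      lam * u + mu * v + nu * w = 0 → lam = 0 ∧ mu = 0 ∧ nu = 0 := by
  classical
  intro lam mu nu hlamF hmuF hnuF heq
  cases nonempty_fintype L
  have hq2 : 2 ≤ q := hq.two_le
  have hmemF : ∀ x : L, x ∈ F ↔ x ^ q = x := memF_iff' F q hq2 hFcard
  -- basic nonvanishing
  have hL2 : 2 ≤ q ^ (2 * n) := le_trans hq2 (Nat.le_self_pow (by omega) q)
  have hβ0 : β ≠ 0 := by
    intro h
    have h1 := pow_orderOf_eq_one β
    rw [hβ] at h1
    rw [h, zero_pow (by omega : q ^ (2 * n) - 1 ≠ 0)] at h1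
    exact zero_ne_one h1
  have hξ0 : ξ ≠ 0 := by rw [hξ]; exact pow_ne_zero _ hβ0
  obtain ⟨i, hu'⟩ := hu
  obtain ⟨j, hv'⟩ := hv
  obtain ⟨k, hw'⟩ := hw
  have hu0 : u ≠ 0 := by rw [hu']; exact pow_ne_zero _ hξ0
  have hv0 : v ≠ 0 := by rw [hv']; exact pow_ne_zero _ hξ0
  have hw0 : w ≠ 0 := by rw [hw']; exact pow_ne_zero _ hξ0
  -- pair lemma for degenerate cases
  have pair : ∀ (x y c d : L), c ∈ F → d ∈ F → x ≠ 0 → y ≠ 0 → x / y ∉ F →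
      c * x + d * y = 0 → c = 0 ∧ d = 0 := by
    intro x y c d hc hd hx0 hy0 hxyF h
    by_cases hc0 : c = 0
    · refine ⟨hc0, ?_⟩
      rw [hc0, zero_mul, zero_add] at h
      rcases mul_eq_zero.mp h with h' | h'
      · exact h'
      · exact absurd h' hy0
    · exfalso
      by_cases hd0 : d = 0
      · rw [hd0, zero_mul, add_zero] at h
        rcases mul_eq_zero.mp h with h' | h'
        · exact hc0 h'
        · exact hx0 h'
      · apply hxyF
        have hxy : x / y = -d / c := by
          rw [div_eq_div_iff hy0 hc0]
          linear_combination h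
        rw [hxy]
        exact F.div_mem (F.neg_mem hd) hc
  by_cases hlam0 : lam = 0
  · subst hlam0
    have h : mu * v + nu * w = 0 := by linear_combination heq
    obtain ⟨h1, h2⟩ := pair v w mu nu hmuF hnuF hv0 hw0 hvw h
    exact ⟨rfl, h1, h2⟩
  by_cases hmu0 : mu = 0
  · subst hmu0
    have h : lam * u + nu * w = 0 := by linear_combination heq
    obtain ⟨h1, h2⟩ := pair u w lam nu hlamF hnuF hu0 hw0 huw h
    exact absurd h1 hlam0
  by_cases hnu0 : nu = 0
  · subst hnu0
    have h : lam * u + mu * v = 0 := by linear_combination heq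
    obtain ⟨h1, h2⟩ := pair u v lam mu hlamF hmuF hu0 hv0 huv h
    exact absurd h1 hlam0
  exfalso
  ---- main case: all coefficients nonzero
  set Q := q ^ n with hQ
  have hQ2 : 2 ≤ Q := le_trans hq2 (Nat.le_self_pow (by omega) q)
  have hdvd1 : q - 1 ∣ Q - 1 := by simpa using Nat.sub_dvd_pow_sub_pow q 1 n
  set e := (Q - 1) / (q - 1) with he
  have he1 : e * (q - 1) = Q - 1 := Nat.div_mul_cancel hdvd1
  have hQQ : Q ^ 2 = q ^ (2 * n) := by rw [hQ, ← pow_mul]; ring_nf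
  have hfact : (Q - 1) * (Q + 1) = q ^ (2 * n) - 1 := by
    have h := Nat.sq_sub_sq Q 1
    rw [one_pow] at h
    rw [mul_comm, ← h, hQQ]
  have hξN : ξ ^ ((q - 1) * (Q + 1)) = 1 := by
    have hexp : e * ((q - 1) * (Q + 1)) = q ^ (2 * n) - 1 := by
      rw [← mul_assoc, he1, hfact]
    rw [hξ, ← pow_mul, hexp, ← hβ, pow_orderOf_eq_one]
  have hxiF : ξ ^ (Q + 1) ∈ F := by
    rw [hmemF]
    have h1 : (ξ ^ (Q + 1)) ^ (q - 1) = 1 := by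
      rw [← pow_mul, mul_comm (Q + 1), hξN]
    calc (ξ ^ (Q + 1)) ^ q = (ξ ^ (Q + 1)) ^ (q - 1) * (ξ ^ (Q + 1)) ^ 1 := by
          rw [← pow_add]; congr 1; omega
      _ = ξ ^ (Q + 1) := by rw [h1, one_mul, pow_one]
  have key : ∀ (x : L) (N i' : ℕ), (x ^ i') ^ N = (x ^ N) ^ i' := by
    intro x N i'
    rw [← pow_mul, mul_comm, pow_mul]
  have hratF : ∀ i' k' : ℕ, (ξ ^ i' / ξ ^ k') ^ (Q + 1) ∈ F := by
    intro i' k'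
    rw [div_pow, key ξ (Q + 1) i', key ξ (Q + 1) k']
    exact F.div_mem (F.pow_mem hxiF i') (F.pow_mem hxiF k')
  have hratN : ∀ i' k' : ℕ, (ξ ^ i' / ξ ^ k') ^ ((q - 1) * (Q + 1)) = 1 := by
    intro i' k'
    rw [div_pow, key ξ ((q - 1) * (Q + 1)) i', key ξ ((q - 1) * (Q + 1)) k', hξN]
    simp
  ---- characteristic and Frobenius
  obtain ⟨p', t, hp', ht0, hpt⟩ := hq
  have hp'' : p'.Prime := Nat.prime_iff.mpr hp'
  haveI hCLp : CharP L (ringChar L) := ringChar.charP L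
  have hprimeP : (ringChar L).Prime := CharP.char_is_prime L (ringChar L)
  obtain ⟨m, -, hcardL⟩ := FiniteField.card L (ringChar L)
  have h2dvd : p' ∣ Fintype.card L := by
    rw [← Nat.card_eq_fintype_card, hLcard]
    exact dvd_trans (by rw [← hpt]; exact dvd_pow_self p' (by omega : t ≠ 0))
      (dvd_pow_self q (by omega : 2 * n ≠ 0))
  rw [hcardL] at h2dvd
  have hppeq : p' = ringChar L :=
    (Nat.prime_dvd_prime_iff_eq hp'' hprimeP).mp (hp''.dvd_of_dvd_pow h2dvd)
  have hptq : (ringChar L) ^ t = q := by rw [← hppeq]; exact hpt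
  haveI : ExpChar L (ringChar L) := ExpChar.prime hprimeP
  set φ : L →+* L := iterateFrobenius L (ringChar L) t with hφdef
  set ψ : L →+* L := iterateFrobenius L (ringChar L) (t * n) with hψdef
  have hφ : ∀ x : L, φ x = x ^ q := by
    intro x; rw [hφdef, iterateFrobenius_def, hptq]
  have hψ : ∀ x : L, ψ x = x ^ Q := by
    intro x; rw [hψdef, iterateFrobenius_def]; congr 1
    rw [pow_mul, hptq, ← hQ]
  have hfixpow : ∀ x : L, x ^ q = x → ∀ s : ℕ, x ^ q ^ s = x := by
    intro x hx s
    induction s with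
    | zero => simp
    | succ s ih => rw [pow_succ, pow_mul, ih, hx]
  -- fixed coefficients
  have hlamq : lam ^ q = lam := (hmemF lam).mp hlamF
  have hmuq : mu ^ q = mu := (hmemF mu).mp hmuF
  have hnuq : nu ^ q = nu := (hmemF nu).mp hnuF
  have hlamQ : lam ^ Q = lam := by rw [hQ]; exact hfixpow lam hlamq n
  have hmuQ : mu ^ Q = mu := by rw [hQ]; exact hfixpow mu hmuq n
  have hnuQ : nu ^ Q = nu := by rw [hQ]; exact hfixpow nu hnuq n
  ---- ratios
  set a := u / w with ha
  set b := v / w with hb'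
  have ha0 : a ≠ 0 := div_ne_zero hu0 hw0
  have hb0 : b ≠ 0 := div_ne_zero hv0 hw0
  have E1 : lam * a + mu * b + nu = 0 := by
    rw [ha, hb']
    field_simp
    linear_combination heq
  set A := a ^ (Q + 1) with hA
  set B := b ^ (Q + 1) with hB
  have hAF : A ∈ F := by rw [hA, ha, hu', hw']; exact hratF i k
  have hBF : B ∈ F := by rw [hB, hb', hv', hw']; exact hratF j k
  have hAq : A ^ q = A := (hmemF A).mp hAF
  have hBq : B ^ q = B := (hmemF B).mp hBF
  have haN : a ^ ((q - 1) * (Q + 1)) = 1 := by rw [ha, hu', hw']; exact hratN i k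
  have hbN : b ^ ((q - 1) * (Q + 1)) = 1 := by rw [hb', hv', hw']; exact hratN j k
  have haQ : a ^ Q = A / a := by
    rw [hA, pow_succ, mul_div_assoc, div_self ha0, mul_one]
  have hbQ : b ^ Q = B / b := by
    rw [hB, pow_succ, mul_div_assoc, div_self hb0, mul_one]
  -- apply ψ to E1
  have E1Q : lam * a ^ Q + mu * b ^ Q + nu = 0 := by
    have h := congrArg ψ E1
    simp only [map_add, map_mul, map_zero] at h
    simp only [hψ] at h
    rw [hlamQ, hmuQ, hnuQ] at h
    exact h
  have E2 : lam * A * b + mu * B * a + nu * (a * b) = 0 := by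
    rw [haQ, hbQ] at E1Q
    field_simp at E1Q
    linear_combination E1Q
  have hquad : (nu * mu) * b ^ 2 + (mu ^ 2 * B + nu ^ 2 - lam ^ 2 * A) * b + mu * nu * B = 0 := by
    linear_combination (mu * B + nu * b) * E1 - lam * E2
  have fixquad : ∀ r : L,
      (nu * mu) * r ^ 2 + (mu ^ 2 * B + nu ^ 2 - lam ^ 2 * A) * r + mu * nu * B = 0 →
      (nu * mu) * (r ^ q) ^ 2 + (mu ^ 2 * B + nu ^ 2 - lam ^ 2 * A) * (r ^ q) + mu * nu * B = 0 := by
    intro r h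
    have h2 := congrArg φ h
    simp only [map_add, map_mul, map_sub, map_pow, map_zero] at h2
    simp only [hφ] at h2
    rw [hlamq, hmuq, hnuq, hAq, hBq] at h2
    exact h2
  have hquadq := fixquad b hquad
  have hquadq2 := fixquad (b ^ q) hquadq
  have hbq_ne : b ^ q ≠ b := by
    intro h
    exact hvw ((hmemF b).mpr h)
  have hbqq : (b ^ q) ^ q = b := by
    by_contra hzb
    have hzy : (b ^ q) ^ q ≠ b ^ q := by
      intro h
      apply hbq_ne
      apply φ.injective
      rw [hφ, hφ]; exact h
    exact quad3' (nu * mu) (mu ^ 2 * B + nu ^ 2 - lam ^ 2 * A) (mu * nu * B)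
      b (b ^ q) ((b ^ q) ^ q) (mul_ne_zero hnu0 hmu0) hquad hquadq hquadq2
      (Ne.symm hbq_ne) (fun h => hzb h.symm) (Ne.symm hzy)
  have hqq1 : 1 ≤ q * q := Nat.one_le_iff_ne_zero.mpr (Nat.mul_ne_zero (by omega) (by omega))
  have hbQQ : b ^ (q * q) = b := by rw [pow_mul]; exact hbqq
  have powsub : ∀ x : L, x ≠ 0 → x ^ (q * q) = x → x ^ (q * q - 1) = 1 := by
    intro x hx0 hx
    have h : x ^ (q * q - 1) * x = 1 * x := by
      rw [one_mul, ← pow_succ, Nat.sub_add_cancel hqq1]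
      exact hx
    exact mul_right_cancel₀ hx0 h
  have hqqfact : q * q - 1 = (q - 1) * (q + 1) := by
    have h := Nat.sq_sub_sq q 1
    rw [one_pow] at h
    rw [show q * q = q ^ 2 by ring, h, mul_comm]
  -- gcd bound (uses n even)
  have hd2 : Nat.gcd (Q + 1) (q + 1) ∣ 2 := by
    obtain ⟨m', hm'⟩ := hneven
    have hq21 : q ^ 2 - 1 = (q + 1) * (q - 1) := by
      have h := Nat.sq_sub_sq q 1
      rwa [one_pow] at h
    have h2 : q + 1 ∣ q ^ 2 - 1 := ⟨q - 1, hq21⟩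
    have h3 : q ^ 2 - 1 ∣ Q - 1 := by
      have hh := Nat.sub_dvd_pow_sub_pow (q ^ 2) 1 m'
      rw [one_pow] at hh
      have hQm : (q ^ 2) ^ m' = Q := by rw [← pow_mul, hQ]; congr 1; omega
      rwa [hQm] at hh
    have h1 : q + 1 ∣ Q - 1 := h2.trans h3
    have hd1 : Nat.gcd (Q + 1) (q + 1) ∣ Q + 1 := Nat.gcd_dvd_left _ _
    have hd2' : Nat.gcd (Q + 1) (q + 1) ∣ Q - 1 := (Nat.gcd_dvd_right _ _).trans h1
    have hfin := Nat.dvd_sub hd1 hd2'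
    rwa [show Q + 1 - (Q - 1) = 2 by omega] at hfin
  have ordbound : ∀ x : L, x ^ ((q - 1) * (Q + 1)) = 1 → x ^ (q * q - 1) = 1 →
      x ^ (2 * (q - 1)) = 1 := by
    intro x hx1 hx2
    apply orderOf_dvd_iff_pow_eq_one.mp
    have hdx1 : orderOf x ∣ (q - 1) * (Q + 1) := orderOf_dvd_of_pow_eq_one hx1
    have hdx2 : orderOf x ∣ (q - 1) * (q + 1) := by
      rw [← hqqfact]; exact orderOf_dvd_of_pow_eq_one hx2
    have hg : orderOf x ∣ Nat.gcd ((q - 1) * (Q + 1)) ((q - 1) * (q + 1)) :=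
      Nat.dvd_gcd hdx1 hdx2
    rw [Nat.gcd_mul_left] at hg
    calc orderOf x ∣ (q - 1) * Nat.gcd (Q + 1) (q + 1) := hg
      _ ∣ (q - 1) * 2 := mul_dvd_mul_left _ hd2
      _ = 2 * (q - 1) := by ring
  have hb2q : b ^ (2 * (q - 1)) = 1 := ordbound b hbN (powsub b hb0 hbQQ)
  -- a also satisfies x^{q*q} = x
  have fix3 : ∀ s r : L, lam * s + mu * r + nu = 0 → lam * s ^ q + mu * r ^ q + nu = 0 := by
    intro s r h
    have h2 := congrArg φ h
    simp only [map_add, map_mul, map_zero] at h2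
    simp only [hφ] at h2
    rw [hlamq, hmuq, hnuq] at h2
    exact h2
  have E1qq := fix3 (a ^ q) (b ^ q) (fix3 a b E1)
  have haqq : (a ^ q) ^ q = a := by
    have h : lam * ((a ^ q) ^ q) = lam * a := by
      rw [hbqq] at E1qq
      linear_combination E1qq - E1
    exact mul_left_cancel₀ hlam0 h
  have haQQ : a ^ (q * q) = a := by rw [pow_mul]; exact haqq
  have ha2q : a ^ (2 * (q - 1)) = 1 := ordbound a haN (powsub a ha0 haQQ)
  -- case analysis on x^{q-1} = ±1
  have sqfact : ∀ x : L, x ^ (2 * (q - 1)) = 1 →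
      (x ^ (q - 1) - 1) * (x ^ (q - 1) + 1) = 0 := by
    intro x hx
    have h : (x ^ (q - 1)) ^ 2 = 1 := by
      rw [← pow_mul, show (q - 1) * 2 = 2 * (q - 1) by ring]; exact hx
    linear_combination h
  have memstep : ∀ x : L, x ^ (q - 1) = 1 → x ∈ F := by
    intro x hx
    rw [hmemF]
    calc x ^ q = x ^ (q - 1) * x ^ 1 := by rw [← pow_add]; congr 1; omega
      _ = x := by rw [hx, one_mul, pow_one]
  rcases mul_eq_zero.mp (sqfact b hb2q) with h | h
  · exact hvw (memstep b (by linear_combination h))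
  · have hbm1 : b ^ (q - 1) = -1 := by linear_combination h
    rcases mul_eq_zero.mp (sqfact a ha2q) with h' | h'
    · exact huw (memstep a (by linear_combination h'))
    · have ham1 : a ^ (q - 1) = -1 := by linear_combination h'
      apply huv
      have hab : a / b = u / v := by
        rw [ha, hb']
        field_simp
      rw [← hab]
      apply memstep
      rw [div_pow, hbm1, ham1]
      simp
end

section
/- Suppose n ≥ 3 is odd, and let E be the unique subfield of L with |E| = q² (it exists since 2 divides 2n). Then every nonzero element of E is a power of ξ, i.e. E^× is contained in the cyclic subgroup of L^× generated by ξ. (Consequently each ⟨ξ⟩-orbit on the points of PG(2n−1,q) is closed under the F_{q²}-line structure, i.e. is a union of (q^n+1)/(q+1) pairwise disjoint lines.) -/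
/-- Suppose `n ≥ 3` is odd and `E` is the subfield of `L` with `q^2` elements.
Then every nonzero element of `E` is a power of `ξ`, i.e. `Eˣ ⊆ ⟨ξ⟩`. -/
theorem stmt10 (q n : ℕ) (hq : IsPrimePow q) (hn : 3 ≤ n) (hnodd : Odd n)
    (L : Type*) [Field L] [Finite L]
    (F K : Subfield L) (hFK : F ≤ K)
    (hFcard : Nat.card F = q) (hKcard : Nat.card K = q ^ n)
    (hLcard : Nat.card L = q ^ (2 * n))
    (β : L) (hβ : orderOf β = q ^ (2 * n) - 1)
    (ξ : L) (hξ : ξ = β ^ ((q ^ n - 1) / (q - 1)))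
    (E : Subfield L) (hEcard : Nat.card E = q ^ 2) :
    ∀ e ∈ E, e ≠ 0 → ∃ j : ℕ, e = ξ ^ j := by
  intro e heE he0
  have hq2 : 2 ≤ q := hq.two_le
  have hq2n : 1 < q ^ (2 * n) := Nat.one_lt_pow (by omega) (by omega)
  have hqn : 1 ≤ q ^ n := Nat.one_le_pow _ _ (by omega)
  set M := q ^ (2 * n) - 1 with hM
  have hMpos : 0 < M := by omega
  -- β is a unit of full order
  have hfin : IsOfFinOrder β := by
    rw [← orderOf_pos_iff, hβ]; omega
  obtain ⟨u, hu⟩ := hfin.isUnit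
  have hou : orderOf u = M := by rw [← orderOf_units, hu, hβ]
  have hcardu : Nat.card Lˣ = M := by rw [Nat.card_units, hLcard]
  have htop : Subgroup.zpowers u = ⊤ :=
    Subgroup.eq_top_of_card_eq _ (by rw [Nat.card_zpowers, hou, hcardu])
  -- e as a unit is a power of u
  have heu : IsUnit e := isUnit_iff_ne_zero.mpr he0
  obtain ⟨v, hv⟩ := heu
  have hvmem : v ∈ Submonoid.powers u := by
    rw [mem_powers_iff_mem_zpowers, htop]; trivial
  obtain ⟨k, hk⟩ := hvmem
  have hek : e = β ^ k := by
    rw [← hv, ← hk, ← hu]; push_cast; rfl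
  -- e ^ (q^2 - 1) = 1
  haveI : Fintype E := Fintype.ofFinite E
  have hE1 : e ^ (q ^ 2 - 1) = 1 := by
    have h := FiniteField.pow_card_sub_one_eq_one (⟨e, heE⟩ : E)
      (by simp [Subtype.ext_iff, he0])
    rw [← Nat.card_eq_fintype_card, hEcard] at h
    have := congrArg (Subtype.val) h
    push_cast at this
    simpa using this
  -- divisibility
  have hdvd : M ∣ k * (q ^ 2 - 1) := by
    rw [← hou]
    apply orderOf_dvd_of_pow_eq_one
    have : ((u ^ (k * (q ^ 2 - 1)) : Lˣ) : L) = 1 := by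
      push_cast [hu, pow_mul, ← hek]
      exact hE1
    exact Units.ext (by simpa using this)
  -- arithmetic
  set d := (q ^ n - 1) / (q - 1) with hdDef
  have hdvd1 : q - 1 ∣ q ^ n - 1 := by
    simpa using Nat.sub_dvd_pow_sub_pow q 1 n
  have hd : d * (q - 1) = q ^ n - 1 := Nat.div_mul_cancel hdvd1
  obtain ⟨t, htt⟩ : q + 1 ∣ q ^ n + 1 := by
    simpa using Odd.nat_add_dvd_pow_add_pow q 1 hnodd
  have h1 : q ^ (2 * n) - 1 = (q ^ n + 1) * (q ^ n - 1) := by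
    rw [mul_comm 2 n, pow_mul]
    have := Nat.sq_sub_sq (q ^ n) 1
    simpa using this
  have hMfact : M = (d * t) * ((q + 1) * (q - 1)) := by
    rw [hM, h1, htt, ← hd]; ring
  have hq21 : q ^ 2 - 1 = (q + 1) * (q - 1) := by
    have := Nat.sq_sub_sq q 1
    simpa [pow_two] using this
  have hdtk : d * t ∣ k := by
    rw [hMfact, hq21] at hdvd
    exact (Nat.mul_dvd_mul_iff_right (Nat.mul_pos (by omega) (by omega))).mp hdvd
  obtain ⟨m, hm⟩ := hdtk
  refine ⟨t * m, ?_⟩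
  rw [hek, hm, hξ, ← pow_mul, mul_assoc]
end

section
/- For all a ∈ K and all natural numbers i, j: Tr_{K/F}(a·(β^{i + j·(q^n−1)/(q−1)})^{q^n+1}) = β^{j·(q^{2n}−1)/(q−1)} · Tr_{K/F}(a·γ^i), where γ := β^{q^n+1} ∈ K, and moreover the factor β^{j·(q^{2n}−1)/(q−1)} lies in F. In particular, if Tr_{K/F}(a·γ^i) = 0 then Tr_{K/F}(a·(β^{i + j·(q^n−1)/(q−1)})^{q^n+1}) = 0 for every j. (This is the key computation showing that the map γ^i ↦ I_i is an anti-automorphism between Π and the space of quadrics Γ.) -/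
/-- The key computation showing `γ^i ↦ I_i` is an anti-automorphism: for `a ∈ K` and `i, j`,
`Tr_{K/F}(a * (β^(i + j(q^n-1)/(q-1)))^(q^n+1)) = β^(j(q^(2n)-1)/(q-1)) * Tr_{K/F}(a * γ^i)`,
the factor `β^(j(q^(2n)-1)/(q-1))` lies in `F`, and in particular `Tr_{K/F}(a * γ^i) = 0`
implies the left-hand side vanishes for all `j`. Here `γ = β^(q^n+1)` and
`Tr_{K/F}(z) = ∑ t < n, z^(q^t)` for `z ∈ K`. -/
theorem stmt11 (q n : ℕ) (hq : IsPrimePow q) (hn : 2 ≤ n)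
    (L : Type*) [Field L] [Finite L]
    (F K : Subfield L) (hFK : F ≤ K)
    (hFcard : Nat.card F = q) (hKcard : Nat.card K = q ^ n)
    (hLcard : Nat.card L = q ^ (2 * n))
    (β : L) (hβ : orderOf β = q ^ (2 * n) - 1)
    (γ : L) (hγ : γ = β ^ (q ^ n + 1)) :
    ∀ a ∈ K, ∀ i j : ℕ,
      (∑ t ∈ Finset.range n,
          (a * (β ^ (i + j * ((q ^ n - 1) / (q - 1)))) ^ (q ^ n + 1)) ^ q ^ t
        = β ^ (j * ((q ^ (2 * n) - 1) / (q - 1)))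
            * ∑ t ∈ Finset.range n, (a * γ ^ i) ^ q ^ t) ∧
      β ^ (j * ((q ^ (2 * n) - 1) / (q - 1))) ∈ F ∧
      ((∑ t ∈ Finset.range n, (a * γ ^ i) ^ q ^ t = 0) →
        ∑ t ∈ Finset.range n,
          (a * (β ^ (i + j * ((q ^ n - 1) / (q - 1)))) ^ (q ^ n + 1)) ^ q ^ t = 0) := by
  classical
  intro a _ha i j
  have hq2 : 2 ≤ q := hq.two_le
  have hq1 : 1 ≤ q - 1 := by omega
  have hn0 : n ≠ 0 := by omega
  have hqn1 : 1 ≤ q ^ n := Nat.one_le_pow _ _ (by omega)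
  have hq2n1 : 1 ≤ q ^ (2 * n) := Nat.one_le_pow _ _ (by omega)
  have hq2n2 : 2 ≤ q ^ (2 * n) := le_trans hq2 (Nat.le_self_pow (by omega) q)
  -- divisibility facts
  have hd1 : (q - 1) ∣ (q ^ n - 1) := by
    simpa using Nat.sub_dvd_pow_sub_pow q 1 n
  have hd2 : (q - 1) ∣ (q ^ (2 * n) - 1) := by
    simpa using Nat.sub_dvd_pow_sub_pow q 1 (2 * n)
  set e := (q ^ n - 1) / (q - 1) with he
  set E := (q ^ (2 * n) - 1) / (q - 1) with hE
  -- key product identity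
  have hprod : (q ^ n - 1) * (q ^ n + 1) = q ^ (2 * n) - 1 := by
    have h2 : q ^ (2 * n) = q ^ n * q ^ n := by rw [two_mul, pow_add]
    have h3 : 1 ≤ q ^ n * q ^ n := Nat.one_le_iff_ne_zero.mpr (by positivity)
    rw [h2]
    zify [hqn1, h3]
    ring
  have heE : e * (q ^ n + 1) = E := by
    obtain ⟨e', he'⟩ := hd1
    have he'' : e = e' := by
      rw [he, he', Nat.mul_div_cancel_left e' (show 0 < q - 1 by omega)]
    have h4 : q ^ (2 * n) - 1 = (q - 1) * (e' * (q ^ n + 1)) := by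
      rw [← hprod, he']; ring
    rw [hE, h4, Nat.mul_div_cancel_left _ (show 0 < q - 1 by omega), he'']
  have hEq : E * (q - 1) = q ^ (2 * n) - 1 := Nat.div_mul_cancel hd2
  -- β facts
  have hβ1 : β ^ (q ^ (2 * n) - 1) = 1 := by rw [← hβ]; exact pow_orderOf_eq_one β
  have hβ0 : β ≠ 0 := by
    intro h
    rw [h, zero_pow (show q ^ (2 * n) - 1 ≠ 0 by omega)] at hβ1
    exact zero_ne_one hβ1
  set c : L := β ^ (j * E) with hc
  have hc0 : c ≠ 0 := pow_ne_zero _ hβ0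
  have hcq1 : c ^ (q - 1) = 1 := by
    rw [hc, ← pow_mul, mul_assoc, hEq, mul_comm, pow_mul, hβ1, one_pow]
  have hcq : c ^ q = c := by
    have : q = (q - 1) + 1 := by omega
    rw [this, pow_succ, hcq1, one_mul]
  have hcqt : ∀ t : ℕ, c ^ q ^ t = c := by
    intro t
    induction t with
    | zero => simp
    | succ t ih => rw [pow_succ, pow_mul, ih, hcq]
  -- the inner element rewrites
  have hinner : (β ^ (i + j * e)) ^ (q ^ n + 1) = γ ^ i * c := by
    rw [hγ, hc]
    simp only [← pow_mul]
    rw [← pow_add]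
    congr 1
    rw [← heE]
    ring
  -- first part
  have hmain : ∑ t ∈ Finset.range n,
        (a * (β ^ (i + j * e)) ^ (q ^ n + 1)) ^ q ^ t
      = c * ∑ t ∈ Finset.range n, (a * γ ^ i) ^ q ^ t := by
    rw [Finset.mul_sum]
    refine Finset.sum_congr rfl fun t _ => ?_
    rw [hinner, ← mul_assoc, mul_pow, hcqt t, mul_comm]
  -- membership of c in F
  have hcF : c ∈ F := by
    have := Fintype.ofFinite L
    set s : Finset L := (Polynomial.nthRoots (q - 1) (1 : L)).toFinset with hs
    have hscard : s.card ≤ q - 1 := by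
      calc s.card ≤ Multiset.card (Polynomial.nthRoots (q - 1) (1 : L)) :=
            Multiset.toFinset_card_le _
        _ ≤ q - 1 := Polynomial.card_nthRoots _ _
    set A : Finset L := (Set.toFinset (F : Set L)).erase 0 with hA
    have hFfin : (Set.toFinset (F : Set L)).card = q := by
      rw [Set.toFinset_card, ← Nat.card_eq_fintype_card]
      simpa using hFcard
    have h0F : (0 : L) ∈ Set.toFinset (F : Set L) := by
      simp [F.zero_mem]
    have hAcard : A.card = q - 1 := by
      rw [hA, Finset.card_erase_of_mem h0F, hFfin]
    have hAs : A ⊆ s := by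
      intro x hx
      rw [hA, Finset.mem_erase, Set.mem_toFinset] at hx
      obtain ⟨hx0, hxF⟩ := hx
      rw [hs, Multiset.mem_toFinset, Polynomial.mem_nthRoots (by omega)]
      -- x is a nonzero element of F, so x^(q-1) = 1
      have : Fintype F := Fintype.ofFinite F
      have hxu : (⟨x, hxF⟩ : F) ≠ 0 := by
        intro h
        apply hx0
        exact congrArg Subtype.val h
      have := FiniteField.pow_card_sub_one_eq_one (⟨x, hxF⟩ : F) hxu
      have hFq : Fintype.card F = q := by rw [← Nat.card_eq_fintype_card, hFcard]
      rw [hFq] at this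
      have := congrArg (Subtype.val : F → L) this
      simpa using this
    have hsA : s ⊆ A := by
      have heq : A = s := Finset.eq_of_subset_of_card_le hAs (by omega)
      rw [heq]
    have hcs : c ∈ s := by
      rw [hs, Multiset.mem_toFinset, Polynomial.mem_nthRoots (by omega)]
      exact hcq1
    have := hsA hcs
    rw [hA, Finset.mem_erase, Set.mem_toFinset] at this
    exact this.2
  refine ⟨hmain, hcF, fun h => ?_⟩
  rw [hmain, h, mul_zero]
end

section
/- With V = L × K and C := {(c·β^k, c·γ^k) : k ∈ ℕ, c ∈ F, c ≠ 0} ∪ {(0, y) : y ∈ K, y ≠ 0}, where γ := β^{q^n+1} ∈ K: if φ : V → F is a nonzero F-linear map that vanishes on {0} × K (i.e. φ(0,y) = 0 for every y ∈ K; the corresponding hyperplane of PG(3n−1,q) contains Π), then the cardinality of {v ∈ C : φ(v) = 0} equals q^{2n} − q^{2n−1} + q^n − q. -/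
set_option maxHeartbeats 2000000
set_option synthInstance.maxHeartbeats 400000


/-- If the `F`-linear map `φ : V → F` (nonzero on `V = L × K`) vanishes on `{0} × K`
(the hyperplane contains `Π`), then `|C ∩ ker φ| = q^(2n) - q^(2n-1) + q^n - q`. -/
theorem stmt14 (q n : ℕ) (hq : IsPrimePow q) (hn : 2 ≤ n)
    (L : Type*) [Field L] [Finite L]
    (F K : Subfield L) (hFK : F ≤ K)
    (hFcard : Nat.card F = q) (hKcard : Nat.card K = q ^ n)
    (hLcard : Nat.card L = q ^ (2 * n))
    (β : L) (hβ : orderOf β = q ^ (2 * n) - 1)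
    (γ : L) (hγ : γ = β ^ (q ^ n + 1))
    (φ : L × L → L)
    (hadd : ∀ u v : L × L, φ (u + v) = φ u + φ v)
    (hsmul : ∀ c ∈ F, ∀ v : L × L, φ (c * v.1, c * v.2) = c * φ v)
    (hrange : ∀ v : L × L, φ v ∈ F)
    (hne : ∃ x y : L, y ∈ K ∧ φ (x, y) ≠ 0)
    (hPi : ∀ y : L, y ∈ K → φ (0, y) = 0) :
    let C : Set (L × L) :=
      {v | (∃ k : ℕ, ∃ c ∈ F, c ≠ 0 ∧ v = (c * β ^ k, c * γ ^ k)) ∨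
           (v.1 = 0 ∧ v.2 ∈ K ∧ v.2 ≠ 0)}
    Set.ncard {v ∈ C | φ v = 0} = q ^ (2 * n) - q ^ (2 * n - 1) + q ^ n - q := by
  intro C
  classical
  have _inst : Fintype L := Fintype.ofFinite L
  have hq2 : 2 ≤ q := hq.two_le
  have hqn : q ≤ q ^ n := by
    calc q = q ^ 1 := (pow_one q).symm
    _ ≤ q ^ n := Nat.pow_le_pow_right (by omega) (by omega)
  have hq2n : q ≤ q ^ (2 * n) := by
    calc q = q ^ 1 := (pow_one q).symm
    _ ≤ q ^ (2 * n) := Nat.pow_le_pow_right (by omega) (by omega)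
  have hqn2 : 2 ≤ q ^ n := le_trans hq2 hqn
  have h2n2 : 2 ≤ q ^ (2 * n) := le_trans hq2 hq2n
  have hsq : q ^ (2 * n) = q ^ n * q ^ n := by rw [two_mul, pow_add]
  have hLf : Fintype.card L = q ^ (2 * n) := by
    rw [← Nat.card_eq_fintype_card, hLcard]
  have hfrob : ∀ x : L, x ^ q ^ (2 * n) = x := by
    intro x; rw [← hLf]; exact FiniteField.pow_card x
  -- K is the fixed field of x ↦ x ^ (q ^ n)
  have hKset : Nat.card (K : Set L) = q ^ n := by
    rw [← hKcard]; exact Nat.card_congr (Equiv.subtypeEquivRight fun x => Iff.rfl)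
  have hFset : Nat.card (F : Set L) = q := by
    rw [← hFcard]; exact Nat.card_congr (Equiv.subtypeEquivRight fun x => Iff.rfl)
  have hKsub : (K : Set L) ⊆ {x : L | x ^ q ^ n = x} := by
    intro x hx
    have h1 : Fintype.card K = q ^ n := by rw [← Nat.card_eq_fintype_card, hKcard]
    have h2 := FiniteField.pow_card (⟨x, hx⟩ : K)
    rw [h1] at h2
    show x ^ q ^ n = x
    simpa [Subtype.ext_iff] using h2
  have hKeq : (K : Set L) = {x : L | x ^ q ^ n = x} := by
    refine Set.eq_of_subset_of_ncard_le hKsub ?_ (Set.toFinite _)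
    have hdeglt : (Polynomial.X : Polynomial L).natDegree <
        (Polynomial.X ^ q ^ n : Polynomial L).natDegree := by
      rw [Polynomial.natDegree_X_pow, Polynomial.natDegree_X]; omega
    have hndeg : (Polynomial.X ^ q ^ n - Polynomial.X : Polynomial L).natDegree = q ^ n := by
      rw [Polynomial.natDegree_sub_eq_left_of_natDegree_lt hdeglt, Polynomial.natDegree_X_pow]
    have hpne : (Polynomial.X ^ q ^ n - Polynomial.X : Polynomial L) ≠ 0 := by
      intro h0
      rw [h0, Polynomial.natDegree_zero] at hndeg
      omega
    have hsub2 : {x : L | x ^ q ^ n = x} ⊆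
        ↑((Polynomial.X ^ q ^ n - Polynomial.X : Polynomial L).roots.toFinset) := by
      intro x hx
      simp only [Finset.coe_sort_coe, Multiset.mem_toFinset, Finset.mem_coe]
      rw [Polynomial.mem_roots hpne]
      simp only [Polynomial.IsRoot, Polynomial.eval_sub, Polynomial.eval_pow,
        Polynomial.eval_X]
      rw [sub_eq_zero]; exact hx
    calc {x : L | x ^ q ^ n = x}.ncard
        ≤ ((Polynomial.X ^ q ^ n - Polynomial.X : Polynomial L).roots.toFinset : Set L).ncard :=
          Set.ncard_le_ncard hsub2 (Set.toFinite _)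
      _ = (Polynomial.X ^ q ^ n - Polynomial.X : Polynomial L).roots.toFinset.card :=
          Set.ncard_coe_finset _
      _ ≤ Multiset.card (Polynomial.X ^ q ^ n - Polynomial.X : Polynomial L).roots :=
          Multiset.toFinset_card_le _
      _ ≤ (Polynomial.X ^ q ^ n - Polynomial.X : Polynomial L).natDegree :=
          Polynomial.card_roots' _
      _ = q ^ n := hndeg
      _ = (K : Set L).ncard := by rw [← Nat.card_coe_set_eq, hKset]
  have hKiff : ∀ x : L, x ∈ K ↔ x ^ q ^ n = x := by
    intro x
    rw [← SetLike.mem_coe, hKeq]; rfl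
  -- powers of the form x ^ (q^n + 1) lie in K
  have hpowK : ∀ x : L, x ^ (q ^ n + 1) ∈ K := by
    intro x
    rw [hKiff]
    rw [← pow_mul]
    have : (q ^ n + 1) * q ^ n = q ^ (2 * n) + q ^ n := by
      rw [hsq]; ring
    rw [this, pow_add, hfrob, pow_succ]; ring
  have hFfix : ∀ c : L, c ∈ F → c ^ q ^ n = c := fun c hc => (hKiff c).mp (hFK hc)
  -- β is nonzero and generates L^×
  have hN0 : q ^ (2 * n) - 1 ≠ 0 := Nat.sub_ne_zero_of_lt (lt_of_lt_of_le Nat.one_lt_two h2n2)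
  have hβ0 : β ≠ 0 := by
    intro h
    have h1 := pow_orderOf_eq_one β
    rw [hβ, h, zero_pow hN0] at h1
    exact zero_ne_one h1
  have hgen : ∀ x : L, x ≠ 0 → ∃ k : ℕ, β ^ k = x := by
    intro x hx
    set u : Lˣ := Units.mk0 β hβ0 with hu
    have hord : orderOf u = Nat.card Lˣ := by
      rw [Nat.card_units, hLcard, ← hβ, ← orderOf_units]; rfl
    have h2 : Subgroup.zpowers u = ⊤ :=
      Subgroup.eq_top_of_card_eq _ (by rw [Nat.card_zpowers, hord])
    have h3 : Units.mk0 x hx ∈ Subgroup.zpowers u := h2 ▸ Subgroup.mem_top _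
    rw [← mem_powers_iff_mem_zpowers] at h3
    obtain ⟨k, hk⟩ := h3
    refine ⟨k, ?_⟩
    have := congrArg Units.val hk
    simpa [hu] using this
  -- basic properties of φ
  have hφ00 : φ (0, 0) = 0 := hPi 0 K.zero_mem
  have hsplit : ∀ x y : L, φ (x, y) = φ (x, 0) + φ (0, y) := by
    intro x y
    have := hadd (x, 0) (0, y)
    simpa using this
  have hφK : ∀ x y : L, y ∈ K → φ (x, y) = φ (x, 0) := by
    intro x y hy
    rw [hsplit, hPi y hy, add_zero]
  -- the linear functional ψ
  set ψ : L →ₗ[↥F] ↥F :=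
    { toFun := fun x => ⟨φ (x, 0), hrange _⟩
      map_add' := fun x y => by
        ext
        push_cast
        have := hadd (x, 0) (y, 0)
        simpa using this
      map_smul' := fun c x => by
        ext
        have := hsmul (c : L) c.2 (x, 0)
        simp only [mul_zero] at this
        simpa [Subfield.smul_def] using this } with hψ
  have hψval : ∀ x : L, (ψ x : L) = φ (x, 0) := fun x => rfl
  set Z : Set L := {x : L | φ (x, 0) = 0} with hZdef
  have hZker : Z = ↑(LinearMap.ker ψ) := by
    ext x
    simp [hZdef, LinearMap.mem_ker, Subtype.ext_iff, hψval]
  -- ψ is surjective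
  have hψne : ∃ x : L, ψ x ≠ 0 := by
    obtain ⟨x, y, hyK, hxy⟩ := hne
    refine ⟨x, ?_⟩
    intro h
    apply hxy
    rw [hφK x y hyK, ← hψval, h]; rfl
  have hrtop : LinearMap.range ψ = ⊤ := by
    obtain ⟨x, hx⟩ := hψne
    rw [eq_top_iff]
    rintro a -
    have : a = (a * (ψ x)⁻¹) • ψ x := by
      rw [smul_eq_mul]; field_simp
    rw [this]
    exact Submodule.smul_mem _ _ (LinearMap.mem_range_self ψ x)
  -- dimension count
  have hFf : Fintype.card ↥F = q := by rw [← Nat.card_eq_fintype_card, hFcard]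
  have hdim : Module.finrank ↥F L = 2 * n := by
    have h1 : Fintype.card L = Fintype.card ↥F ^ Module.finrank ↥F L := Module.card_eq_pow_finrank
    rw [hLf, hFf] at h1
    exact (Nat.pow_right_injective hq2 h1).symm
  have hkerdim : Module.finrank ↥F (LinearMap.ker ψ) = 2 * n - 1 := by
    have h1 := LinearMap.finrank_range_add_finrank_ker ψ
    rw [hrtop, finrank_top, Module.finrank_self, hdim] at h1
    omega
  have hZcard : Z.ncard = q ^ (2 * n - 1) := by
    rw [hZker, ← Nat.card_coe_set_eq]
    have e : Nat.card ↥(↑(LinearMap.ker ψ) : Set L) = Nat.card ↥(LinearMap.ker ψ) :=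
      Nat.card_congr (Equiv.subtypeEquivRight fun x => Iff.rfl)
    rw [e, Nat.card_eq_fintype_card,
      Module.card_eq_pow_finrank (K := ↥F) (V := ↥(LinearMap.ker ψ)), hFf, hkerdim]
  have h0Z : (0 : L) ∈ Z := hφ00
  -- the main set identity
  have hmain : {v ∈ C | φ v = 0} =
      (fun p : L × L => (p.1, p.1 ^ (q ^ n + 1) * p.2)) '' ((Z \ {0}) ×ˢ ((F : Set L) \ {0}))
      ∪ (fun y : L => ((0 : L), y)) '' ((K : Set L) \ {0}) := by
    ext v
    simp only [Set.mem_setOf_eq, Set.mem_union, Set.mem_image, Set.mem_prod, Set.mem_diff,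
      Set.mem_singleton_iff, SetLike.mem_coe, Prod.exists]
    constructor
    · rintro ⟨hC, hv0⟩
      rcases hC with ⟨k, c, hcF, hc0, rfl⟩ | ⟨h1, h2K, h20⟩
      · left
        have hx0 : c * β ^ k ≠ 0 := mul_ne_zero hc0 (pow_ne_zero _ hβ0)
        have hγK : c * γ ^ k ∈ K := K.mul_mem (hFK hcF) (K.pow_mem ((hKiff γ).mpr (by
          rw [hγ, ← pow_mul]
          have : (q ^ n + 1) * q ^ n = q ^ (2 * n) + q ^ n := by
            rw [hsq]; ring
          rw [this, pow_add, hfrob, pow_succ]; ring)) k)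
        have hxZ : c * β ^ k ∈ Z := by
          have := hφK (c * β ^ k) (c * γ ^ k) hγK
          rw [hv0] at this
          exact this.symm
        refine ⟨c * β ^ k, c⁻¹, ⟨⟨hxZ, hx0⟩, F.inv_mem hcF, inv_ne_zero hc0⟩, ?_⟩
        have hc' : c ^ q ^ n = c := hFfix c hcF
        have hexp : (β ^ k) ^ (q ^ n + 1) = γ ^ k := by
          rw [hγ, ← pow_mul, ← pow_mul, Nat.mul_comm]
        rw [Prod.mk.injEq]
        refine ⟨rfl, ?_⟩
        rw [mul_pow, hexp]
        have : c ^ (q ^ n + 1) = c * c := by rw [pow_succ, hc']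
        rw [this]
        field_simp
      · right
        exact ⟨v.2, ⟨h2K, h20⟩, by rw [← h1]⟩
    · rintro (⟨x, c, ⟨⟨hxZ, hx0⟩, hcF, hc0⟩, rfl⟩ | ⟨y, ⟨hyK, hy0⟩, rfl⟩)
      · constructor
        · left
          obtain ⟨k, hk⟩ := hgen (c * x) (mul_ne_zero hc0 hx0)
          refine ⟨k, c⁻¹, F.inv_mem hcF, inv_ne_zero hc0, ?_⟩
          have hc' : c ^ q ^ n = c := hFfix c hcF
          rw [Prod.mk.injEq]
          constructor
          · rw [hk]; field_simp
          · rw [hγ, ← pow_mul, Nat.mul_comm (q ^ n + 1) k, pow_mul, hk, mul_pow]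
            have : c ^ (q ^ n + 1) = c * c := by rw [pow_succ, hc']
            rw [this]
            field_simp
        · rw [hφK _ _ (K.mul_mem (hpowK x) (hFK hcF)), hxZ]
      · exact ⟨Or.inr ⟨rfl, hyK, hy0⟩, hPi y hyK⟩
  -- disjointness
  have hdisj : Disjoint
      ((fun p : L × L => (p.1, p.1 ^ (q ^ n + 1) * p.2)) '' ((Z \ {0}) ×ˢ ((F : Set L) \ {0})))
      ((fun y : L => ((0 : L), y)) '' ((K : Set L) \ {0})) := by
    rw [Set.disjoint_left]
    rintro v ⟨⟨x, c⟩, ⟨⟨_, hx0⟩, _⟩, rfl⟩ ⟨y, _, hv⟩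
    exact hx0 (congrArg Prod.fst hv).symm
  -- injectivity counts
  have hinj1 : Set.InjOn (fun p : L × L => (p.1, p.1 ^ (q ^ n + 1) * p.2))
      ((Z \ {0}) ×ˢ ((F : Set L) \ {0})) := by
    rintro ⟨x, c⟩ ⟨⟨_, hx0⟩, _⟩ ⟨x', c'⟩ ⟨⟨_, hx'0⟩, _⟩ h
    simp only [Prod.mk.injEq] at h
    obtain ⟨h1, h2⟩ := h
    subst h1
    exact Prod.ext rfl (mul_left_cancel₀ (pow_ne_zero _ hx0) h2)
  have hinj2 : Set.InjOn (fun y : L => ((0 : L), y)) ((K : Set L) \ {0}) := by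
    rintro y _ y' _ h
    simpa using h
  have hprod : ((Z \ {0}) ×ˢ ((F : Set L) \ {0})).ncard =
      (Z \ {0}).ncard * ((F : Set L) \ {0}).ncard := by
    rw [← Nat.card_coe_set_eq, ← Nat.card_coe_set_eq, ← Nat.card_coe_set_eq,
      ← Nat.card_prod]
    exact Nat.card_congr (Equiv.Set.prod _ _)
  have hZd : (Z \ {0}).ncard = q ^ (2 * n - 1) - 1 := by
    rw [Set.ncard_diff_singleton_of_mem h0Z, hZcard]
  have hFd : ((F : Set L) \ {0}).ncard = q - 1 := by
    rw [Set.ncard_diff_singleton_of_mem F.zero_mem,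
      ← Nat.card_coe_set_eq, hFset]
  have hKd : ((K : Set L) \ {0}).ncard = q ^ n - 1 := by
    rw [Set.ncard_diff_singleton_of_mem K.zero_mem,
      ← Nat.card_coe_set_eq, hKset]
  rw [hmain, Set.ncard_union_eq hdisj (Set.toFinite _) (Set.toFinite _),
    Set.ncard_image_of_injOn hinj1, Set.ncard_image_of_injOn hinj2, hprod, hZd, hFd, hKd]
  -- arithmetic
  have hpow : q ^ (2 * n) = q ^ (2 * n - 1) * q := by
    rw [← pow_succ]; congr 1; omega
  rw [hpow]
  set a := q ^ (2 * n - 1) with ha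
  have ha1 : q ≤ a := by
    rw [ha]
    calc q = q ^ 1 := (pow_one q).symm
    _ ≤ q ^ (2 * n - 1) := Nat.pow_le_pow_right (by omega) (by omega)
  have haq : a ≤ a * q := Nat.le_mul_of_pos_right a (by omega)
  have h3 : q ≤ a * q - a + q ^ n := le_trans hqn (Nat.le_add_left _ _)
  have h1a : 1 ≤ a := by omega
  have h1q : 1 ≤ q := by omega
  have h1qn : 1 ≤ q ^ n := by omega
  zify [h1a, h1q, h1qn, haq, h3]
  ring
end

section
/- Let γ := β^{q^n+1} ∈ K. If k is a natural number such that β^k ∈ F and γ^k = β^k (i.e. the pair (β^k, γ^k) is an F-scalar multiple of (1,1)), then q^{2n} − 1 divides k. (Consequently the cyclic group generated by the map (x,y) ↦ (βx, γy) acts sharply transitively on the q^{2n} − 1 projective points of C ∖ Π, the orbit of the point (1,1).) -/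
/-- If `β^k ∈ F` and `γ^k = β^k` (i.e. `(β^k, γ^k)` is an `F`-scalar multiple of `(1,1)`),
then `q^(2n) - 1 ∣ k`; hence the cyclic group generated by `(x,y) ↦ (βx, γy)` acts sharply
transitively on the `q^(2n) - 1` projective points of `C \ Π`. Here `γ = β^(q^n+1)`. -/
theorem stmt15 (q n : ℕ) (hq : IsPrimePow q) (hn : 2 ≤ n)
    (L : Type*) [Field L] [Finite L]
    (F K : Subfield L) (hFK : F ≤ K)
    (hFcard : Nat.card F = q) (hKcard : Nat.card K = q ^ n)
    (hLcard : Nat.card L = q ^ (2 * n))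
    (β : L) (hβ : orderOf β = q ^ (2 * n) - 1)
    (γ : L) (hγ : γ = β ^ (q ^ n + 1)) :
    ∀ k : ℕ, β ^ k ∈ F → γ ^ k = β ^ k → (q ^ (2 * n) - 1) ∣ k := by
  intro k _ hk
  have hq2 : 2 ≤ q := hq.two_le
  have hqpow : 2 ≤ q ^ (2 * n) := le_trans hq2 (Nat.le_self_pow (by omega) q)
  have hord : 0 < orderOf β := by rw [hβ]; omega
  have hβ0 : β ≠ 0 := by
    intro h
    have h0 : orderOf (0 : L) = 0 :=
      orderOf_eq_zero_iff'.2 (fun m hm => by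
        rw [zero_pow hm.ne']; exact zero_ne_one)
    rw [h, h0] at hord; omega
  have hβk0 : β ^ k ≠ 0 := pow_ne_zero _ hβ0
  -- from γ^k = β^k, get β^(k * q^n) = 1
  have h1 : β ^ (k * q ^ n) * β ^ k = β ^ k := by
    rw [← pow_add]
    rw [hγ, ← pow_mul] at hk
    rw [← hk]
    ring_nf
  have h2 : β ^ (k * q ^ n) = 1 := by
    field_simp at h1
    exact h1
  have h3 : (q ^ (2 * n) - 1) ∣ k * q ^ n := by
    rw [← hβ]; exact orderOf_dvd_of_pow_eq_one h2
  have hcop : Nat.Coprime (q ^ (2 * n) - 1) (q ^ n) := by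
    have h4 : Nat.Coprime (q ^ (2 * n) - 1) (q ^ (2 * n)) := by
      have heq : q ^ (2 * n) - 1 + 1 = q ^ (2 * n) := by omega
      have h5 : Nat.Coprime (q ^ (2 * n) - 1) (q ^ (2 * n) - 1 + 1) := by
        rw [Nat.coprime_self_add_right]; exact Nat.coprime_one_right _
      rwa [heq] at h5
    exact h4.coprime_dvd_right (pow_dvd_pow q (by omega))
  exact hcop.dvd_of_dvd_mul_right h3
end
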